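/- arXiv:0903.3071 — 6 statements merged into one kernel-verified Lean document; each statement's English description precedes it below -/
import Mathlib

section
/- For all x > 0, the inequality [ψ'(x)]² + ψ''(x) > 0 holds, where ψ is the digamma function. -/
open Real Filter Set Topology

/-- Telescoping sum for an antitone sequence tending to 0. -/
lemma hasSum_telescope {h : ℕ → ℝ} (hle : ∀ k, h (k + 1) ≤ h k)
    (h0 : Tendsto h atTop (𝓝 0)) : HasSum (fun k => h k - h (k + 1)) (h 0) := by
  rw [hasSum_iff_tendsto_nat_of_nonneg (fun k => by linarith [hle k])]
  simp only [Finset.sum_range_sub']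
  simpa using (tendsto_const_nhds (x := h 0)).sub (h0.comp tendsto_natCast_atTop_atTop)

lemma summable_inv_sq {y : ℝ} (hy : 0 < y) : Summable (fun k : ℕ => 1 / (y + k) ^ 2) := by
  rw [← summable_nat_add_iff 1]
  refine Summable.of_nonneg_of_le (fun k => by positivity) (fun k => ?_)
    ((summable_nat_add_iff 1).mpr (summable_one_div_nat_pow.mpr one_lt_two))
  have h1 : (0:ℝ) < (k:ℝ) + 1 := by positivity
  have h2 : ((k:ℝ) + 1) ≤ y + (k + 1 : ℕ) := by push_cast; linarith
  have h3 : (0:ℝ) < y + ((k:ℝ) + 1) := by positivity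
  rw [div_le_div_iff₀ (by positivity) (by positivity)]
  push_cast
  nlinarith [sq_nonneg ((k:ℝ)+1)]

lemma summable_inv_cube {y : ℝ} (hy : 0 < y) : Summable (fun k : ℕ => 1 / (y + k) ^ 3) := by
  refine Summable.of_nonneg_of_le (fun k => by positivity) (fun k => ?_)
    ((summable_inv_sq hy).mul_left (1 / y))
  have h1 : (0:ℝ) < y + k := by positivity
  rw [one_div_mul_one_div, div_le_div_iff₀ (by positivity) (by positivity)]
  nlinarith [pow_pos h1 2, pow_pos h1 3]

noncomputable def Ssum (x : ℝ) : ℝ := ∑' k : ℕ, 1 / (x + k) ^ 2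
noncomputable def Tsum (x : ℝ) : ℝ := ∑' k : ℕ, 1 / (x + k) ^ 3

lemma Ssum_rec {y : ℝ} (hy : 0 < y) : Ssum y = 1 / y ^ 2 + Ssum (y + 1) := by
  rw [Ssum, Summable.tsum_eq_zero_add (summable_inv_sq hy)]
  have : ∀ k : ℕ, 1 / (y + ((k:ℝ) + 1)) ^ 2 = 1 / ((y + 1) + (k:ℝ)) ^ 2 := fun k => by ring_nf
  simp only [Nat.cast_add, Nat.cast_one, this, Ssum]
  norm_num

lemma Tsum_rec {y : ℝ} (hy : 0 < y) : Tsum y = 1 / y ^ 3 + Tsum (y + 1) := by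
  rw [Tsum, Summable.tsum_eq_zero_add (summable_inv_cube hy)]
  have : ∀ k : ℕ, 1 / (y + ((k:ℝ) + 1)) ^ 3 = 1 / ((y + 1) + (k:ℝ)) ^ 3 := fun k => by ring_nf
  simp only [Nat.cast_add, Nat.cast_one, this, Tsum]
  norm_num

lemma Ssum_lower {w : ℝ} (hw : 0 < w) : 1 / w + 1 / (2 * w ^ 2) ≤ Ssum w := by
  set h : ℕ → ℝ := fun k => 1 / (w + k) + 1 / (2 * (w + k) ^ 2) with hh
  have hpos : ∀ k : ℕ, (0:ℝ) < w + k := fun k => by positivity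
  have hle : ∀ k, h (k + 1) ≤ h k := by
    intro k
    have h1 := hpos k
    simp only [hh]
    push_cast
    gcongr <;> first | positivity | linarith
  have h0 : Tendsto h atTop (𝓝 0) := by
    have t0 : Tendsto (fun k : ℕ => w + (k:ℝ)) atTop atTop :=
      tendsto_atTop_add_const_left _ _ tendsto_natCast_atTop_atTop
    have t1 : Tendsto (fun k : ℕ => (w + (k:ℝ))⁻¹) atTop (𝓝 0) := t0.inv_tendsto_atTop
    have t2 : Tendsto (fun k : ℕ => ((w + (k:ℝ))^2)⁻¹) atTop (𝓝 (0^2)) := by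
      simpa [← inv_pow] using t1.pow 2
    norm_num at t2
    have := t1.add (t2.mul_const (2⁻¹ : ℝ))
    norm_num at this
    refine this.congr fun k => ?_
    simp [hh, one_div, mul_inv, mul_comm]
  have htel := hasSum_telescope hle h0
  have hbound : ∀ k : ℕ, h k - h (k + 1) ≤ 1 / (w + k) ^ 2 := by
    intro k
    have h1 := hpos k
    have h2 : (0:ℝ) < w + ((k:ℝ) + 1) := by positivity
    simp only [hh]
    push_cast
    have key : (1 / (w + (k:ℝ)) - 1 / (w + ((k:ℝ) + 1)))
        + (1 / (2 * (w + (k:ℝ)) ^ 2) - 1 / (2 * (w + ((k:ℝ) + 1)) ^ 2)) ≤ 1 / (w + (k:ℝ)) ^ 2 := by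
      rw [div_sub_div _ _ (by linarith) (by linarith), div_sub_div _ _ (by positivity) (by positivity),
        div_add_div _ _ (by positivity) (by positivity), div_le_div_iff₀ (by positivity) (by positivity)]
      ring_nf
      nlinarith [pow_pos h1 2, pow_pos h2 2, pow_pos h1 3, pow_pos h2 3,
        mul_pos (pow_pos h1 2) (pow_pos h2 2)]
    linarith
  calc 1 / w + 1 / (2 * w ^ 2) = h 0 := by simp [hh]
    _ = ∑' k, (h k - h (k+1)) := htel.tsum_eq.symm
    _ ≤ Ssum w := htel.summable.tsum_le_tsum hbound (summable_inv_sq hw)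

lemma tendsto_add_inv {w : ℝ} : Tendsto (fun k : ℕ => 1 / (w + (k:ℝ))) atTop (𝓝 0) := by
  have t0 : Tendsto (fun k : ℕ => w + (k:ℝ)) atTop atTop :=
    tendsto_atTop_add_const_left _ _ tendsto_natCast_atTop_atTop
  have t1 : Tendsto (fun k : ℕ => (w + (k:ℝ))⁻¹) atTop (𝓝 0) := t0.inv_tendsto_atTop
  simpa [one_div] using t1

lemma hasSum_inv_telescope {y : ℝ} (hy : 0 < y) :
    HasSum (fun k : ℕ => 1 / (y + k) - 1 / (y + (k + 1))) (1 / y) := by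
  have hpos : ∀ k : ℕ, (0:ℝ) < y + k := fun k => by positivity
  have := hasSum_telescope (h := fun k : ℕ => 1 / (y + k)) (fun k => by
      have h1 := hpos k
      push_cast
      gcongr <;> linarith) tendsto_add_inv
  simp only [Nat.cast_zero, add_zero] at this
  refine this.congr_fun fun k => by push_cast; ring_nf


noncomputable def psi : ℝ → ℝ := deriv (fun x => Real.log (Real.Gamma x))

lemma logGamma_diff {y : ℝ} (hy : 0 < y) :
    DifferentiableAt ℝ (fun x => Real.log (Real.Gamma x)) y :=
  (Real.differentiableAt_Gamma fun m => by have : (0:ℝ) ≤ m := m.cast_nonneg; linarith).log (Real.Gamma_pos_of_pos hy).ne'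

lemma psi_rec {y : ℝ} (hy : 0 < y) : psi (y + 1) = psi y + 1 / y := by
  have h_rec : ∀ x : ℝ, 0 < x → Real.log (Real.Gamma (x + 1)) = Real.log (Real.Gamma x) + Real.log x := by
    intro x hx
    rw [Real.Gamma_add_one hx.ne', Real.log_mul hx.ne' (Real.Gamma_pos_of_pos hx).ne', add_comm]
  have : psi (y + 1) = deriv (fun x => Real.log (Real.Gamma (x + 1))) y := by
    rw [psi, ← deriv_comp_add_const]
  rw [this]
  have heq : (fun x => Real.log (Real.Gamma (x + 1))) =ᶠ[𝓝 y]
      (fun x => Real.log (Real.Gamma x) + Real.log x) := by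
    filter_upwards [eventually_gt_nhds hy] with t ht using h_rec t ht
  rw [heq.deriv_eq, deriv_fun_add (logGamma_diff hy) (Real.differentiableAt_log hy.ne'),
    Real.deriv_log, one_div, psi]

lemma psi_mono {a b : ℝ} (ha : 0 < a) (hab : a ≤ b) : psi a ≤ psi b := by
  rcases eq_or_lt_of_le hab with rfl | h
  · exact le_refl _
  have hc := Real.convexOn_log_Gamma
  have hb : 0 < b := lt_of_lt_of_le ha hab
  have hda : DifferentiableAt ℝ (Real.log ∘ Real.Gamma) a := by
    simpa [Function.comp_def] using logGamma_diff ha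
  have hdb : DifferentiableAt ℝ (Real.log ∘ Real.Gamma) b := by
    simpa [Function.comp_def] using logGamma_diff hb
  have h1 := hc.deriv_le_slope (mem_Ioi.mpr ha) (mem_Ioi.mpr hb) h hda
  have h2 := hc.slope_le_deriv (mem_Ioi.mpr ha) (mem_Ioi.mpr hb) h hdb
  have e : deriv (Real.log ∘ Real.Gamma) = psi := by
    simp [psi, Function.comp_def]
  rw [e] at h1 h2
  linarith

noncomputable def Dfun (x : ℝ) : ℝ := psi 1 + ∑' k : ℕ, (1 / (k + 1) - 1 / (x + k))

lemma summable_Dterm {x : ℝ} (hx : 0 < x) :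
    Summable (fun k : ℕ => 1 / ((k:ℝ) + 1) - 1 / (x + k)) := by
  refine Summable.of_abs ?_
  refine Summable.of_nonneg_of_le (fun k => abs_nonneg _) (fun k => ?_)
    (((summable_nat_add_iff 1).mpr (summable_one_div_nat_pow.mpr one_lt_two)).mul_left
      (|x - 1| * (x + 1) / x))
  have h1 : (0:ℝ) < (k:ℝ) + 1 := by positivity
  have h2 : (0:ℝ) < x + k := by positivity
  have e : 1 / ((k:ℝ) + 1) - 1 / (x + k) = (x - 1) / (((k:ℝ) + 1) * (x + k)) := by
    field_simp; ring
  rw [e, abs_div, abs_of_pos (by positivity : (0:ℝ) < ((k:ℝ) + 1) * (x + k))]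
  have eR : |x - 1| * (x + 1) / x * (1 / ((((k + 1) : ℕ)):ℝ) ^ 2)
      = |x - 1| * (x + 1) / (x * ((k:ℝ) + 1) ^ 2) := by
    push_cast; field_simp
  rw [eR, div_le_div_iff₀ (by positivity) (by positivity)]
  have key : x * (((k:ℝ) + 1) ^ 2) ≤ (x + 1) * (((k:ℝ) + 1) * (x + k)) := by
    nlinarith [sq_nonneg x, Nat.cast_nonneg (α := ℝ) k, sq_nonneg ((k:ℝ)+1)]
  nlinarith [mul_le_mul_of_nonneg_left key (abs_nonneg (x - 1))]

lemma Dfun_one : Dfun 1 = psi 1 := by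
  have : ∀ k : ℕ, (1 / ((k:ℝ) + 1) - 1 / (1 + k)) = 0 := fun k => by ring
  rw [Dfun, tsum_congr this]
  simp

lemma Dfun_rec {y : ℝ} (hy : 0 < y) : Dfun (y + 1) = Dfun y + 1 / y := by
  have hB := (summable_Dterm hy).hasSum
  have htel := hasSum_inv_telescope hy
  have hsum := hB.add htel
  have he : (fun k : ℕ => (1 / ((k:ℝ) + 1) - 1 / (y + k)) + (1 / (y + k) - 1 / (y + (k + 1))))
      = fun k : ℕ => 1 / ((k:ℝ) + 1) - 1 / ((y + 1) + k) := by
    funext k; ring_nf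
  rw [he] at hsum
  have : ∑' k : ℕ, (1 / ((k:ℝ) + 1) - 1 / ((y + 1) + k)) = (∑' k : ℕ, (1 / ((k:ℝ) + 1) - 1 / (y + k))) + 1 / y :=
    hsum.tsum_eq
  rw [Dfun, Dfun]
  push_cast
  rw [this]
  ring

lemma Dfun_mono {a b : ℝ} (ha : 0 < a) (hab : a ≤ b) : Dfun a ≤ Dfun b := by
  have hb : 0 < b := lt_of_lt_of_le ha hab
  have h := Summable.tsum_le_tsum (f := fun k : ℕ => 1 / ((k:ℝ) + 1) - 1 / (a + k))
    (g := fun k : ℕ => 1 / ((k:ℝ) + 1) - 1 / (b + k)) (fun k => by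
      have h1 : (0:ℝ) < a + k := by positivity
      have : 1 / (b + (k:ℝ)) ≤ 1 / (a + k) := by gcongr
      linarith) (summable_Dterm ha) (summable_Dterm hb)
  simp only [Dfun]
  linarith

lemma K_shift {z : ℝ} (hz : 0 < z) (n : ℕ) :
    psi (z + n) - Dfun (z + n) = psi z - Dfun z := by
  induction n with
  | zero => simp
  | succ n ih =>
    have hzn : 0 < z + n := by positivity
    have e : z + ((n:ℝ) + 1) = (z + n) + 1 := by ring
    push_cast
    rw [e, psi_rec hzn, Dfun_rec hzn]
    push_cast at ih
    linarith

lemma psi_nat_eq_Dfun (n : ℕ) (hn : 1 ≤ n) : psi n = Dfun n := by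
  induction n with
  | zero => omega
  | succ n ih =>
    rcases Nat.eq_or_lt_of_le hn with h | h
    · have hn0 : n = 0 := by omega
      subst hn0
      push_cast
      rw [Dfun_one]
    · have hn1 : 1 ≤ n := by omega
      have hpos : (0:ℝ) < n := by exact_mod_cast Nat.pos_of_ne_zero (by omega)
      push_cast
      rw [psi_rec hpos, Dfun_rec hpos, ih hn1]

lemma psi_eq_Dfun {y : ℝ} (hy : 0 < y) : psi y = Dfun y := by
  -- first for y ∈ (0, 1]
  have key : ∀ z : ℝ, 0 < z → z ≤ 1 → psi z = Dfun z := by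
    intro z hz hz1
    have hbound : ∀ n : ℕ, 1 ≤ n → |psi z - Dfun z| ≤ 1 / n := by
      intro n hn
      have hnR : (1:ℝ) ≤ n := by exact_mod_cast hn
      have hn0 : (0:ℝ) < n := by linarith
      have hzn : (n:ℝ) ≤ z + n := by linarith
      have hzn1 : z + (n:ℝ) ≤ (n:ℝ) + 1 := by linarith
      have hP := psi_nat_eq_Dfun n hn
      have hP1 : psi ((n:ℝ) + 1) = Dfun ((n:ℝ) + 1) := by
        have := psi_nat_eq_Dfun (n + 1) (by omega); push_cast at this; exact this
      have hrec := psi_rec hn0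
      have p1 : psi ((n:ℝ)) ≤ psi (z + n) := psi_mono hn0 hzn
      have p2 : psi (z + n) ≤ psi ((n:ℝ) + 1) := psi_mono (by linarith) hzn1
      have d1 : Dfun ((n:ℝ)) ≤ Dfun (z + n) := Dfun_mono hn0 hzn
      have d2 : Dfun (z + n) ≤ Dfun ((n:ℝ) + 1) := Dfun_mono (by linarith) hzn1
      have hK := K_shift hz n
      rw [abs_le, ← hK]
      constructor <;> linarith
    have h0 : Tendsto (fun n : ℕ => 1 / ((n:ℝ))) atTop (𝓝 0) :=
      tendsto_one_div_atTop_nhds_zero_nat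
    have : |psi z - Dfun z| ≤ 0 := by
      refine ge_of_tendsto h0 ?_
      filter_upwards [eventually_ge_atTop 1] with n hn using hbound n hn
    have := abs_nonneg (psi z - Dfun z)
    have : |psi z - Dfun z| = 0 := le_antisymm ‹_› ‹_›
    have := abs_eq_zero.mp this
    linarith
  -- general case
  by_cases h1 : y ≤ 1
  · exact key y hy h1
  · push_neg at h1
    set n : ℕ := ⌈y⌉₊ - 1 with hn
    have hceil1 : 1 ≤ ⌈y⌉₊ := Nat.one_le_ceil_iff.mpr hy
    have hcast : ((n:ℝ)) = (⌈y⌉₊ : ℝ) - 1 := by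
      rw [hn]; push_cast [Nat.cast_sub hceil1]; ring
    have hyle : y ≤ (⌈y⌉₊ : ℝ) := Nat.le_ceil y
    have hylt : (⌈y⌉₊ : ℝ) < y + 1 := by
      exact_mod_cast Nat.ceil_lt_add_one hy.le
    set z : ℝ := y - n with hzdef
    have hz : 0 < z := by rw [hzdef, hcast]; linarith
    have hz1 : z ≤ 1 := by rw [hzdef, hcast]; linarith
    have hyz : y = z + n := by rw [hzdef]; ring
    have := K_shift hz n
    rw [← hyz] at this
    have hkey := key z hz hz1
    linarith

lemma hasDerivAt_Dfun {x : ℝ} (hx : 0 < x) : HasDerivAt Dfun (Ssum x) x := by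
  have hsum : HasDerivAt (fun z => ∑' k : ℕ, (1 / ((k:ℝ) + 1) - 1 / (z + k)))
      (∑' k : ℕ, 1 / (x + (k:ℝ)) ^ 2) x := by
    refine hasDerivAt_tsum_of_isPreconnected (u := fun k : ℕ => 1 / (x / 2 + k) ^ 2)
      (F := ℝ) (g := fun (k : ℕ) (z : ℝ) => 1 / ((k:ℝ) + 1) - 1 / (z + k))
      (g' := fun (k : ℕ) (z : ℝ) => 1 / (z + (k:ℝ)) ^ 2) (y₀ := x) (y := x)
      (summable_inv_sq (by linarith)) (isOpen_Ioi (a := x / 2))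
      ((convex_Ioi _).isPreconnected) (fun k z hz => ?_) (fun k z hz => ?_)
      (mem_Ioi.mpr (by linarith)) ?_ (mem_Ioi.mpr (by linarith))
    · have hk : (0:ℝ) ≤ k := Nat.cast_nonneg k
      have hz' : x / 2 < z := hz
      have hzk : (0:ℝ) < z + k := by linarith
      have h1 : HasDerivAt (fun z : ℝ => z + (k:ℝ)) 1 z := (hasDerivAt_id z).add_const _
      have h2 := h1.inv hzk.ne'
      have h3 := h2.const_sub (1 / ((k:ℝ) + 1))
      convert h3 using 1
      · funext t; simp [one_div]
      · field_simp
    · have hk : (0:ℝ) ≤ k := Nat.cast_nonneg k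
      have hz' : x / 2 < z := hz
      have hzk : (0:ℝ) < z + k := by linarith
      have hxk : (0:ℝ) < x / 2 + k := by linarith
      rw [Real.norm_eq_abs, abs_of_pos (one_div_pos.mpr (pow_pos hzk 2))]
      exact one_div_le_one_div_of_le (pow_pos hxk 2) (by nlinarith)
    · exact summable_Dterm hx
  have h := hsum.const_add (psi 1)
  have hfun : Dfun = fun z => psi 1 + ∑' k : ℕ, (1 / ((k:ℝ) + 1) - 1 / (z + k)) := by
    funext z; rw [Dfun]
  rw [hfun, Ssum]
  exact h

lemma deriv_psi_eq {x : ℝ} (hx : 0 < x) : deriv psi x = Ssum x := by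
  have heq : psi =ᶠ[𝓝 x] Dfun := by
    filter_upwards [eventually_gt_nhds hx] with t ht using psi_eq_Dfun ht
  rw [heq.deriv_eq]
  exact (hasDerivAt_Dfun hx).deriv

lemma hasDerivAt_Ssum {x : ℝ} (hx : 0 < x) : HasDerivAt Ssum (-2 * Tsum x) x := by
  have hsum : HasDerivAt (fun z => ∑' k : ℕ, 1 / (z + (k:ℝ)) ^ 2)
      (∑' k : ℕ, -2 / (x + (k:ℝ)) ^ 3) x := by
    refine hasDerivAt_tsum_of_isPreconnected (u := fun k : ℕ => 2 / (x / 2 + k) ^ 3)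
      (F := ℝ) (g := fun (k : ℕ) (z : ℝ) => 1 / (z + (k:ℝ)) ^ 2)
      (g' := fun (k : ℕ) (z : ℝ) => -2 / (z + (k:ℝ)) ^ 3) (y₀ := x) (y := x)
      (((summable_inv_cube (by linarith : (0:ℝ) < x / 2)).mul_left 2).congr
        (fun k => by rw [mul_one_div]))
      (isOpen_Ioi (a := x / 2)) ((convex_Ioi _).isPreconnected)
      (fun k z hz => ?_) (fun k z hz => ?_)
      (mem_Ioi.mpr (by linarith)) ?_ (mem_Ioi.mpr (by linarith))
    · have hk : (0:ℝ) ≤ k := Nat.cast_nonneg k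
      have hz' : x / 2 < z := hz
      have hzk : (0:ℝ) < z + k := by linarith
      have h1 : HasDerivAt (fun z : ℝ => z + (k:ℝ)) 1 z := (hasDerivAt_id z).add_const _
      have h2 : HasDerivAt (fun t : ℝ => ((t + (k:ℝ)) ^ 2)⁻¹) _ z := (h1.pow 2).inv (pow_pos hzk 2).ne'
      have h3 : HasDerivAt (fun t : ℝ => 1 / (t + (k:ℝ)) ^ 2) (-2 / (z + (k:ℝ)) ^ 3) z := by
        convert h2 using 1
        · funext t; simp [one_div]
        · rw [Pi.pow_apply]
          field_simp
          ring
      exact h3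
    · have hk : (0:ℝ) ≤ k := Nat.cast_nonneg k
      have hz' : x / 2 < z := hz
      have hzk : (0:ℝ) < z + k := by linarith
      have hxk : (0:ℝ) < x / 2 + k := by linarith
      rw [Real.norm_eq_abs, abs_div, abs_of_nonpos (by norm_num : (-2:ℝ) ≤ 0),
        abs_of_pos (pow_pos hzk 3)]
      rw [div_le_div_iff₀ (pow_pos hzk 3) (pow_pos hxk 3)]
      have hle : (x / 2 + (k:ℝ)) ^ 3 ≤ (z + (k:ℝ)) ^ 3 :=
        pow_le_pow_left₀ hxk.le (by linarith) 3
      nlinarith [hle]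
    · exact summable_inv_sq hx
  have e : ∑' k : ℕ, -2 / (x + (k:ℝ)) ^ 3 = -2 * Tsum x := by
    rw [Tsum, ← tsum_mul_left]
    exact tsum_congr fun k => by rw [mul_one_div]
  rw [e] at hsum
  have hfun : Ssum = fun z => ∑' k : ℕ, 1 / (z + (k:ℝ)) ^ 2 := by funext z; rw [Ssum]
  rw [hfun]
  exact hsum

lemma deriv_deriv_psi_eq {x : ℝ} (hx : 0 < x) : deriv (deriv psi) x = -2 * Tsum x := by
  have heq : deriv psi =ᶠ[𝓝 x] Ssum := by
    filter_upwards [eventually_gt_nhds hx] with t ht using deriv_psi_eq ht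
  rw [heq.deriv_eq]
  exact (hasDerivAt_Ssum hx).deriv

lemma tendsto_Ssum {x : ℝ} (hx : 0 < x) :
    Tendsto (fun n : ℕ => Ssum (x + n)) atTop (𝓝 0) := by
  have hid : ∀ n : ℕ, Ssum (x + n) = Ssum x - ∑ k ∈ Finset.range n, 1 / (x + k) ^ 2 := by
    intro n
    induction n with
    | zero => simp
    | succ n ih =>
      have hxn : (0:ℝ) < x + n := by positivity
      have e : x + ((n:ℝ) + 1) = (x + n) + 1 := by ring
      push_cast
      rw [e, Finset.sum_range_succ]
      have := Ssum_rec hxn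
      linarith
  simp only [hid]
  have := ((summable_inv_sq hx).hasSum.tendsto_sum_nat)
  have h2 := (tendsto_const_nhds (x := Ssum x)).sub this
  simpa [Ssum] using h2

lemma tendsto_Tsum {x : ℝ} (hx : 0 < x) :
    Tendsto (fun n : ℕ => Tsum (x + n)) atTop (𝓝 0) := by
  have hid : ∀ n : ℕ, Tsum (x + n) = Tsum x - ∑ k ∈ Finset.range n, 1 / (x + k) ^ 3 := by
    intro n
    induction n with
    | zero => simp
    | succ n ih =>
      have hxn : (0:ℝ) < x + n := by positivity
      have e : x + ((n:ℝ) + 1) = (x + n) + 1 := by ring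
      push_cast
      rw [e, Finset.sum_range_succ]
      have := Tsum_rec hxn
      linarith
  simp only [hid]
  have := ((summable_inv_cube hx).hasSum.tendsto_sum_nat)
  have h2 := (tendsto_const_nhds (x := Tsum x)).sub this
  simpa [Tsum] using h2

noncomputable def Qfun (z : ℝ) : ℝ := Ssum z ^ 2 - 2 * Tsum z

lemma Qfun_gap {z : ℝ} (hz : 0 < z) : Qfun (z + 1) < Qfun z := by
  have hS := Ssum_rec hz
  have hT := Tsum_rec hz
  have e : Qfun z - Qfun (z + 1)
      = 2 * Ssum (z + 1) / z ^ 2 + 1 / z ^ 4 - 2 / z ^ 3 := by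
    rw [Qfun, Qfun, hS, hT]; field_simp; ring
  have hlow := Ssum_lower (by linarith : (0:ℝ) < z + 1)
  have key : 2 * (1 / (z + 1) + 1 / (2 * (z + 1) ^ 2)) / z ^ 2 + 1 / z ^ 4 - 2 / z ^ 3
      = 1 / (z ^ 4 * (z + 1) ^ 2) := by
    field_simp; ring
  have hmono : 2 * (1 / (z + 1) + 1 / (2 * (z + 1) ^ 2)) / z ^ 2 ≤ 2 * Ssum (z + 1) / z ^ 2 := by
    gcongr
  have hpos : (0:ℝ) < 1 / (z ^ 4 * (z + 1) ^ 2) := by positivity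
  nlinarith [e, key, hmono, hpos]

lemma Qfun_nonneg {x : ℝ} (hx : 0 < x) : 0 ≤ Qfun x := by
  have hmono : ∀ n : ℕ, Qfun (x + n) ≤ Qfun x := by
    intro n
    induction n with
    | zero => simp
    | succ n ih =>
      have hxn : (0:ℝ) < x + n := by positivity
      have := Qfun_gap hxn
      push_cast
      have e : x + ((n:ℝ) + 1) = (x + n) + 1 := by ring
      rw [e]
      push_cast at ih
      linarith
  have hlim : Tendsto (fun n : ℕ => Qfun (x + n)) atTop (𝓝 0) := by
    have := ((tendsto_Ssum hx).pow 2).sub ((tendsto_Tsum hx).const_mul 2)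
    norm_num at this
    exact this.congr fun n => by rw [Qfun]
  exact le_of_tendsto hlim (Eventually.of_forall hmono)

theorem trigamma_sq_add_tetragamma_pos (x : ℝ) (hx : 0 < x) :
    (deriv psi x) ^ 2 + deriv (deriv psi) x > 0 := by
  rw [deriv_psi_eq hx, deriv_deriv_psi_eq hx]
  have h1 := Qfun_gap hx
  have h2 := Qfun_nonneg (by linarith : (0:ℝ) < x + 1)
  have : 0 < Qfun x := lt_of_le_of_lt h2 h1
  rw [Qfun] at this
  linarith
end

section
/- For all x > 0, 1/x + 1/(2x²) + 1/(6x³) − 1/(30x⁵) < ψ'(x) < 1/x + 1/(2x²) + 1/(6x³), where ψ' is the trigamma function. -/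
open Real Filter Topology Finset Set

namespace TrigammaAux

/-- derivative of `logGammaSeq · n` -/
noncomputable def Q (n : ℕ) (x : ℝ) : ℝ :=
  Real.log n - ∑ m ∈ Finset.range (n + 1), 1 / (x + (m : ℝ))

/-- second derivative of `logGammaSeq · n` -/
noncomputable def R (n : ℕ) (x : ℝ) : ℝ :=
  ∑ m ∈ Finset.range (n + 1), 1 / (x + (m : ℝ)) ^ 2

/-- digamma -/
noncomputable def D (x : ℝ) : ℝ :=
  (-Real.eulerMascheroniConstant - 1 / x) +
    ∑' m : ℕ, (1 / ((m : ℝ) + 1) - 1 / (x + ((m : ℝ) + 1)))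

/-- trigamma -/
noncomputable def S (x : ℝ) : ℝ := 1 / x ^ 2 + ∑' m : ℕ, 1 / (x + ((m : ℝ) + 1)) ^ 2

lemma harmonic_cast (n : ℕ) :
    (harmonic n : ℝ) = ∑ m ∈ Finset.range n, 1 / ((m : ℝ) + 1) := by
  unfold harmonic
  push_cast
  simp [one_div]

lemma Q_eq (n : ℕ) (x : ℝ) :
    Q n x = ((Real.log n - (harmonic n : ℝ)) - 1 / x) +
      ∑ m ∈ Finset.range n, (1 / ((m : ℝ) + 1) - 1 / (x + ((m : ℝ) + 1))) := by
  unfold Q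
  rw [Finset.sum_range_succ' (fun m => 1 / (x + (m : ℝ))) n, Finset.sum_sub_distrib,
    harmonic_cast]
  push_cast
  ring

lemma R_eq (n : ℕ) (x : ℝ) :
    R n x = 1 / x ^ 2 + ∑ m ∈ Finset.range n, 1 / (x + ((m : ℝ) + 1)) ^ 2 := by
  unfold R
  rw [Finset.sum_range_succ' (fun m => 1 / (x + (m : ℝ)) ^ 2) n]
  push_cast
  ring

lemma summable_base : Summable (fun m : ℕ => 1 / ((m : ℝ) + 1) ^ 2) := by
  have h := (Real.summable_one_div_nat_pow (p := 2)).2 one_lt_two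
  exact ((summable_nat_add_iff 1).2 h).congr (fun n => by push_cast; ring)

lemma hasDerivAt_P (n : ℕ) (x : ℝ) (hx : 0 < x) :
    HasDerivAt (fun y => Real.BohrMollerup.logGammaSeq y n) (Q n x) x := by
  have hsum : HasDerivAt (fun y => ∑ m ∈ Finset.range (n + 1), Real.log (y + (m : ℝ)))
      (∑ m ∈ Finset.range (n + 1), 1 / (x + (m : ℝ))) x := by
    apply HasDerivAt.fun_sum
    intro m _
    have hne : x + (m : ℝ) ≠ 0 := by positivity
    have := ((hasDerivAt_id x).add_const (m : ℝ)).log hne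
    simpa [one_div] using this
  have h1 : HasDerivAt (fun y : ℝ => y * Real.log n + Real.log (Nat.factorial n : ℝ)) (Real.log n) x :=
    (hasDerivAt_mul_const (Real.log n)).add_const _
  have := h1.sub hsum
  exact this.congr_deriv rfl |>.congr_of_eventuallyEq (by
    filter_upwards with y
    unfold Real.BohrMollerup.logGammaSeq
    rw [Pi.sub_apply])

lemma hasDerivAt_Q (n : ℕ) (x : ℝ) (hx : 0 < x) :
    HasDerivAt (Q n) (R n x) x := by
  have hsum : HasDerivAt (fun y => ∑ m ∈ Finset.range (n + 1), 1 / (y + (m : ℝ)))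
      (∑ m ∈ Finset.range (n + 1), -(1 / (x + (m : ℝ)) ^ 2)) x := by
    apply HasDerivAt.fun_sum
    intro m _
    have hne : x + (m : ℝ) ≠ 0 := by positivity
    have h := ((hasDerivAt_id x).add_const (m : ℝ)).inv hne
    simp only [id_eq] at h
    have h2 : -(1 : ℝ) / (x + (m : ℝ)) ^ 2 = -(1 / (x + (m : ℝ)) ^ 2) := by ring
    rw [h2] at h
    simpa [one_div, Pi.inv_def] using h
  have := hsum.const_sub (Real.log n)
  have heq : -∑ m ∈ Finset.range (n + 1), -(1 / (x + (m : ℝ)) ^ 2) = R n x := by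
    unfold R; simp
  rw [heq] at this
  exact this

/-- constant-in-n sequences converge uniformly -/
lemma tuo_const {α : Type*} [UniformSpace α] {β ι : Type*} (c : β → α) (l : Filter ι)
    (s : Set β) : TendstoUniformlyOn (fun _ => c) c l s := by
  intro u hu
  filter_upwards with n y _
  exact refl_mem_uniformity hu

lemma tuo_Q (b : ℝ) : TendstoUniformlyOn Q D atTop (Set.Ioo 0 b) := by
  have h1 : TendstoUniformlyOn
      (fun (n : ℕ) (x : ℝ) => (Real.log n - (harmonic n : ℝ)) - 1 / x)
      (fun x => -Real.eulerMascheroniConstant - 1 / x) atTop (Set.Ioo 0 b) := by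
    rw [Metric.tendstoUniformlyOn_iff]
    intro ε hε
    have := (Metric.tendsto_atTop.1 Real.tendsto_harmonic_sub_log) ε hε
    obtain ⟨N, hN⟩ := this
    filter_upwards [eventually_ge_atTop N] with n hn x _
    have h := hN n hn
    rw [Real.dist_eq] at h ⊢
    have : -Real.eulerMascheroniConstant - 1 / x - (Real.log n - (harmonic n : ℝ) - 1 / x)
        = ((harmonic n : ℝ) - Real.log n) - Real.eulerMascheroniConstant := by ring
    rw [this]
    exact h
  have h2 : TendstoUniformlyOn
      (fun (n : ℕ) (x : ℝ) => ∑ m ∈ Finset.range n,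
        (1 / ((m : ℝ) + 1) - 1 / (x + ((m : ℝ) + 1))))
      (fun x => ∑' m : ℕ, (1 / ((m : ℝ) + 1) - 1 / (x + ((m : ℝ) + 1)))) atTop
      (Set.Ioo 0 b) := by
    apply tendstoUniformlyOn_tsum_nat (u := fun m => b * (1 / ((m : ℝ) + 1) ^ 2))
      (summable_base.mul_left b)
    intro m x hx
    obtain ⟨hx0, hxb⟩ := hx
    have hm1 : (0 : ℝ) < (m : ℝ) + 1 := by positivity
    have hxm : (0 : ℝ) < x + ((m : ℝ) + 1) := by positivity
    have hval : 1 / ((m : ℝ) + 1) - 1 / (x + ((m : ℝ) + 1))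
        = x / (((m : ℝ) + 1) * (x + ((m : ℝ) + 1))) := by
      field_simp
      ring
    rw [hval, Real.norm_eq_abs, abs_of_nonneg (by positivity), mul_one_div]
    rw [div_le_div_iff₀ (by positivity) (by positivity)]
    nlinarith [sq_nonneg ((m : ℝ) + 1), mul_pos hx0 hm1]
  have := h1.add h2
  apply this.congr
  filter_upwards with n x _
  exact (Q_eq n x).symm

lemma tlu_Q : TendstoLocallyUniformlyOn Q D atTop (Set.Ioi 0) := by
  intro u hu x hx
  refine ⟨Set.Ioo 0 (x + 1), ?_, ?_⟩
  · exact mem_nhdsWithin_of_mem_nhds (isOpen_Ioo.mem_nhds ⟨hx, lt_add_one x⟩)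
  · exact tuo_Q (x + 1) u hu

lemma tuo_R : TendstoUniformlyOn R S atTop (Set.Ioi 0) := by
  have h1 := tuo_const (fun x : ℝ => 1 / x ^ 2) (atTop : Filter ℕ) (Set.Ioi (0:ℝ))
  have h2 : TendstoUniformlyOn
      (fun (n : ℕ) (x : ℝ) => ∑ m ∈ Finset.range n, 1 / (x + ((m : ℝ) + 1)) ^ 2)
      (fun x => ∑' m : ℕ, 1 / (x + ((m : ℝ) + 1)) ^ 2) atTop (Set.Ioi 0) := by
    apply tendstoUniformlyOn_tsum_nat summable_base
    intro m x hx
    have hx0 : (0 : ℝ) < x := hx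
    have hm1 : (0 : ℝ) < (m : ℝ) + 1 := by positivity
    rw [Real.norm_eq_abs, abs_of_nonneg (by positivity)]
    apply one_div_le_one_div_of_le (by positivity)
    nlinarith
  have := h1.add h2
  apply this.congr
  filter_upwards with n x _
  exact (R_eq n x).symm

lemma tendsto_Q_pt (x : ℝ) (hx : 0 < x) :
    Tendsto (fun n => Q n x) atTop (𝓝 (D x)) :=
  (tuo_Q (x + 1)).tendsto_at ⟨hx, lt_add_one x⟩

lemma hasDerivAt_logGamma (x : ℝ) (hx : 0 < x) :
    HasDerivAt (fun y => Real.log (Real.Gamma y)) (D x) x := by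
  apply hasDerivAt_of_tendstoLocallyUniformlyOn isOpen_Ioi tlu_Q
    (Filter.Eventually.of_forall (fun n y hy => hasDerivAt_P n y hy))
    (fun y hy => Real.BohrMollerup.tendsto_log_gamma hy) hx

lemma hasDerivAt_D (x : ℝ) (hx : 0 < x) : HasDerivAt D (S x) x := by
  apply hasDerivAt_of_tendstoLocallyUniformlyOn isOpen_Ioi
    tuo_R.tendstoLocallyUniformlyOn
    (Filter.Eventually.of_forall (fun n y hy => hasDerivAt_Q n y hy))
    (fun y hy => tendsto_Q_pt y hy) hx

lemma deriv_psi_eq (x : ℝ) (hx : 0 < x) : deriv psi x = S x := by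
  have hev : psi =ᶠ[𝓝 x] D := by
    filter_upwards [isOpen_Ioi.eventually_mem hx] with y hy
    exact (hasDerivAt_logGamma y hy).deriv
  rw [hev.deriv_eq]
  exact (hasDerivAt_D x hx).deriv

lemma key (x : ℝ) (hx : 0 < x) :
    HasSum (fun m : ℕ => 1 / (x + (m : ℝ)) ^ 2) (deriv psi x) := by
  rw [deriv_psi_eq x hx]
  have hs : Summable (fun m : ℕ => 1 / (x + ((m : ℝ) + 1)) ^ 2) := by
    apply Summable.of_nonneg_of_le (fun m => by positivity) _ summable_base
    intro m
    have hm1 : (0 : ℝ) < (m : ℝ) + 1 := by positivity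
    apply one_div_le_one_div_of_le (by positivity)
    nlinarith
  have h1 : HasSum (fun m : ℕ => 1 / (x + ((m : ℝ) + 1)) ^ 2)
      (∑' m : ℕ, 1 / (x + ((m : ℝ) + 1)) ^ 2) := hs.hasSum
  have h2 : HasSum (fun m : ℕ => (fun k : ℕ => 1 / (x + (k : ℝ)) ^ 2) (m + 1))
      (∑' m : ℕ, 1 / (x + ((m : ℝ) + 1)) ^ 2) := by
    simpa [Nat.cast_add, Nat.cast_one, add_assoc] using h1
  have h3 := (hasSum_nat_add_iff (f := fun k : ℕ => 1 / (x + (k : ℝ)) ^ 2) 1).1 h2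
  simp only [Finset.range_one, Finset.sum_singleton, Nat.cast_zero, add_zero] at h3
  unfold S
  convert h3 using 1
  · rfl
  · ring

/-- telescoping sums of nonneg terms -/
lemma hasSum_telescope {F : ℕ → ℝ} (hpos : ∀ n, 0 ≤ F n - F (n + 1))
    (hlim : Tendsto F atTop (𝓝 0)) : HasSum (fun n => F n - F (n + 1)) (F 0) := by
  rw [hasSum_iff_tendsto_nat_of_nonneg hpos]
  have heq : (fun n => ∑ i ∈ Finset.range n, (F i - F (i + 1))) = fun n => F 0 - F n := by
    funext n; exact Finset.sum_range_sub' F n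
  rw [heq]
  simpa using tendsto_const_nhds.sub hlim

noncomputable def fv (t : ℝ) : ℝ := 1 / t + 1 / (2 * t ^ 2) + 1 / (6 * t ^ 3)
noncomputable def hv (t : ℝ) : ℝ := 1 / (30 * t ^ 5)

lemma fv_id (t : ℝ) (ht : 0 < t) :
    fv t - fv (t + 1) = 1 / t ^ 2 + 1 / (6 * t ^ 3 * (t + 1) ^ 3) := by
  have ht1 : (0 : ℝ) < t + 1 := by linarith
  unfold fv
  field_simp
  ring

lemma gv_id (t : ℝ) (ht : 0 < t) :
    (fv t - hv t) - (fv (t + 1) - hv (t + 1)) =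
      1 / t ^ 2 - (5 * t ^ 2 + 5 * t + 1) / (30 * t ^ 5 * (t + 1) ^ 5) := by
  have ht1 : (0 : ℝ) < t + 1 := by linarith
  unfold fv hv
  field_simp
  ring

end TrigammaAux

theorem trigamma_bounds (x : ℝ) (hx : 0 < x) :
    1 / x + 1 / (2 * x ^ 2) + 1 / (6 * x ^ 3) - 1 / (30 * x ^ 5) < deriv psi x ∧
    deriv psi x < 1 / x + 1 / (2 * x ^ 2) + 1 / (6 * x ^ 3) := by
  open TrigammaAux in
  have hk := TrigammaAux.key x hx
  set F : ℕ → ℝ := fun m => TrigammaAux.fv (x + (m : ℝ)) with hF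
  set H : ℕ → ℝ := fun m => TrigammaAux.hv (x + (m : ℝ)) with hH
  have hxm : ∀ m : ℕ, (0 : ℝ) < x + (m : ℝ) := fun m => by positivity
  have hcast : ∀ m : ℕ, x + ((m + 1 : ℕ) : ℝ) = (x + (m : ℝ)) + 1 := fun m => by
    push_cast; ring
  -- limits
  have hxn : Tendsto (fun n : ℕ => x + (n : ℝ)) atTop atTop :=
    tendsto_atTop_add_const_left _ x tendsto_natCast_atTop_atTop
  have hterm : ∀ (c : ℝ) (k : ℕ), 0 < c → 0 < k →
      Tendsto (fun n : ℕ => 1 / (c * (x + (n : ℝ)) ^ k)) atTop (𝓝 0) := by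
    intro c k hc hk'
    apply Tendsto.div_atTop tendsto_const_nhds
    exact ((tendsto_pow_atTop hk'.ne').comp hxn).const_mul_atTop hc
  have hA1 : Tendsto (fun n : ℕ => 1 / (x + (n : ℝ))) atTop (𝓝 0) := by
    simpa using hterm 1 1 one_pos one_pos
  have hF0 : Tendsto F atTop (𝓝 0) := by
    have := (hA1.add (hterm 2 2 two_pos two_pos)).add (hterm 6 3 (by norm_num) (by norm_num))
    simpa [hF, TrigammaAux.fv] using this
  have hH0 : Tendsto H atTop (𝓝 0) := by
    simpa [hH, TrigammaAux.hv] using hterm 30 5 (by norm_num) (by norm_num)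
  -- step identities
  have hFstep : ∀ m : ℕ, F m - F (m + 1) =
      1 / (x + (m : ℝ)) ^ 2 + 1 / (6 * (x + (m : ℝ)) ^ 3 * ((x + (m : ℝ)) + 1) ^ 3) := by
    intro m
    have := TrigammaAux.fv_id (x + (m : ℝ)) (hxm m)
    simp only [hF]
    rw [hcast m]
    exact this
  have hGstep : ∀ m : ℕ, (F m - F (m + 1)) - (H m - H (m + 1)) =
      1 / (x + (m : ℝ)) ^ 2 -
        (5 * (x + (m : ℝ)) ^ 2 + 5 * (x + (m : ℝ)) + 1) /
          (30 * (x + (m : ℝ)) ^ 5 * ((x + (m : ℝ)) + 1) ^ 5) := by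
    intro m
    have := TrigammaAux.gv_id (x + (m : ℝ)) (hxm m)
    simp only [hF, hH]
    rw [hcast m]
    linarith [this]
  -- telescoping sums
  have hFpos : ∀ m : ℕ, 0 ≤ F m - F (m + 1) := by
    intro m
    rw [hFstep m]
    have h1 := hxm m
    positivity
  have hHpos : ∀ m : ℕ, 0 ≤ H m - H (m + 1) := by
    intro m
    simp only [hH]
    rw [hcast m]
    have h1 := hxm m
    rw [sub_nonneg]
    unfold TrigammaAux.hv
    apply one_div_le_one_div_of_le (by positivity)
    have : (x + (m : ℝ)) ^ 5 ≤ ((x + (m : ℝ)) + 1) ^ 5 :=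
      pow_le_pow_left₀ (by positivity) (by linarith) 5
    linarith
  have hBsum : HasSum (fun m => F m - F (m + 1)) (F 0) :=
    TrigammaAux.hasSum_telescope hFpos hF0
  have hHsum : HasSum (fun m => H m - H (m + 1)) (H 0) :=
    TrigammaAux.hasSum_telescope hHpos hH0
  have hGsum : HasSum (fun m => (F m - F (m + 1)) - (H m - H (m + 1))) (F 0 - H 0) :=
    hBsum.sub hHsum
  have hF0v : F 0 = TrigammaAux.fv x := by simp [hF]
  have hH0v : H 0 = TrigammaAux.hv x := by simp [hH]
  constructor
  · -- lower bound
    have hle : ∀ m : ℕ, (F m - F (m + 1)) - (H m - H (m + 1)) ≤ 1 / (x + (m : ℝ)) ^ 2 := by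
      intro m
      rw [hGstep m]
      have h1 := hxm m
      have h2 : 0 < (5 * (x + (m : ℝ)) ^ 2 + 5 * (x + (m : ℝ)) + 1) /
          (30 * (x + (m : ℝ)) ^ 5 * ((x + (m : ℝ)) + 1) ^ 5) := by positivity
      linarith
    have hlt : (F 0 - F (0 + 1)) - (H 0 - H (0 + 1)) < 1 / (x + ((0 : ℕ) : ℝ)) ^ 2 := by
      rw [hGstep 0]
      have h1 := hxm 0
      have h2 : 0 < (5 * (x + ((0 : ℕ) : ℝ)) ^ 2 + 5 * (x + ((0 : ℕ) : ℝ)) + 1) /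
          (30 * (x + ((0 : ℕ) : ℝ)) ^ 5 * ((x + ((0 : ℕ) : ℝ)) + 1) ^ 5) := by positivity
      linarith
    have := hasSum_lt hle hlt hGsum hk
    rw [hF0v, hH0v] at this
    have he : TrigammaAux.fv x - TrigammaAux.hv x =
        1 / x + 1 / (2 * x ^ 2) + 1 / (6 * x ^ 3) - 1 / (30 * x ^ 5) := rfl
    linarith [this]
  · -- upper bound
    have hle : ∀ m : ℕ, 1 / (x + (m : ℝ)) ^ 2 ≤ F m - F (m + 1) := by
      intro m
      rw [hFstep m]
      have h1 := hxm m
      have h2 : 0 < 1 / (6 * (x + (m : ℝ)) ^ 3 * ((x + (m : ℝ)) + 1) ^ 3) := by positivity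
      linarith
    have hlt : 1 / (x + ((0 : ℕ) : ℝ)) ^ 2 < F 0 - F (0 + 1) := by
      rw [hFstep 0]
      have h1 := hxm 0
      have h2 : 0 < 1 / (6 * (x + ((0 : ℕ) : ℝ)) ^ 3 * ((x + ((0 : ℕ) : ℝ)) + 1) ^ 3) := by
        positivity
      linarith
    have := hasSum_lt hle hlt hk hBsum
    rw [hF0v] at this
    have he : TrigammaAux.fv x = 1 / x + 1 / (2 * x ^ 2) + 1 / (6 * x ^ 3) := rfl
    linarith [this]
end

section
/- For all x > 0, −1/x² − 1/x³ − 1/(2x⁴) < ψ''(x) < −1/x² − 1/x³, where ψ'' is the tetragamma function. -/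
open Real Filter Finset Topology

namespace Tetra

noncomputable def F1 (n : ℕ) (x : ℝ) : ℝ := Real.log n - ∑ m ∈ Finset.range (n+1), (x + m)⁻¹
noncomputable def F2 (n : ℕ) (x : ℝ) : ℝ := ∑ m ∈ Finset.range (n+1), ((x + m)^2)⁻¹
noncomputable def F3 (n : ℕ) (x : ℝ) : ℝ := ∑ m ∈ Finset.range (n+1), (-2) * ((x + m)^3)⁻¹
noncomputable def G1 (x : ℝ) : ℝ :=
  -Real.eulerMascheroniConstant + ∑' m : ℕ, (((m:ℝ)+1)⁻¹ - (x + m)⁻¹)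
noncomputable def G2 (x : ℝ) : ℝ := ∑' m : ℕ, ((x + m)^2)⁻¹
noncomputable def G3 (x : ℝ) : ℝ := ∑' m : ℕ, (-2) * ((x + m)^3)⁻¹

lemma summable_inv_pow {x : ℝ} (hx : 0 < x) {k : ℕ} (hk : 1 < k) :
    Summable (fun m : ℕ => ((x + m)^k)⁻¹) := by
  have h := (Real.summable_one_div_nat_add_rpow x k).mpr (by exact_mod_cast hk)
  refine h.congr fun m => ?_
  have h1 : (0:ℝ) < (m:ℝ) + x := by positivity
  rw [abs_of_pos h1, Real.rpow_natCast ((m:ℝ)+x) k, one_div, add_comm]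

lemma summable_G1term {x : ℝ} (hx : 0 < x) :
    Summable (fun m : ℕ => ((m:ℝ)+1)⁻¹ - (x + m)⁻¹) := by
  set c := min x 1 with hc
  have hc0 : 0 < c := lt_min hx one_pos
  refine Summable.of_norm_bounded (((summable_inv_pow hc0 (k := 2) one_lt_two)).mul_left |x-1|)
    fun m => ?_
  have h1 : (0:ℝ) < (m:ℝ) + 1 := by positivity
  have h2 : (0:ℝ) < x + m := by positivity
  have key : ((m:ℝ)+1)⁻¹ - (x + m)⁻¹ = (x - 1) / (((m:ℝ)+1) * (x + m)) := by
    field_simp; ring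
  have hden : (0:ℝ) < ((m:ℝ)+1) * (x + m) := by positivity
  have hle : (c + (m:ℝ))^2 ≤ ((m:ℝ)+1) * (x + m) := by
    have hcx : c ≤ x := min_le_left _ _
    have hc1 : c ≤ 1 := min_le_right _ _
    nlinarith [hc0.le, (Nat.cast_nonneg m : (0:ℝ) ≤ m)]
  rw [key, norm_div, Real.norm_eq_abs, Real.norm_eq_abs, abs_of_pos hden]
  calc |x - 1| / (((m:ℝ)+1) * (x + m)) ≤ |x - 1| / ((c + (m:ℝ))^2) :=
        div_le_div_of_nonneg_left (abs_nonneg _) (by positivity) hle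
    _ = |x - 1| * ((c + (m:ℝ))^2)⁻¹ := div_eq_mul_inv _ _

lemma hasDerivAt_F (n : ℕ) {y : ℝ} (hy : 0 < y) :
    HasDerivAt (fun x => Real.BohrMollerup.logGammaSeq x n) (F1 n y) y := by
  have hsum : HasDerivAt (fun x : ℝ => ∑ m ∈ Finset.range (n+1), Real.log (x + m))
      (∑ m ∈ Finset.range (n+1), (y + m)⁻¹) y := by
    refine HasDerivAt.fun_sum fun m _ => ?_
    have h := ((hasDerivAt_id y).add_const (m:ℝ)).log (by positivity)
    simpa using h
  have h2 : HasDerivAt (fun x : ℝ => x * Real.log n + Real.log (Nat.factorial n))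
      (Real.log n) y := (hasDerivAt_mul_const _).add_const _
  simpa [Real.BohrMollerup.logGammaSeq, F1] using h2.fun_sub hsum

lemma hasDerivAt_F1 (n : ℕ) {y : ℝ} (hy : 0 < y) : HasDerivAt (F1 n) (F2 n y) y := by
  have hsum : HasDerivAt (fun x : ℝ => ∑ m ∈ Finset.range (n+1), (x + m)⁻¹)
      (∑ m ∈ Finset.range (n+1), -((y + m)^2)⁻¹) y := by
    refine HasDerivAt.fun_sum fun m _ => ?_
    have h := ((hasDerivAt_id' y).add_const (m:ℝ)).fun_inv (by positivity)
    refine h.congr_deriv ?_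
    field_simp
  have := (hasDerivAt_const y (Real.log n)).fun_sub hsum
  simp [Finset.sum_neg_distrib] at this
  exact this

lemma hasDerivAt_F2 (n : ℕ) {y : ℝ} (hy : 0 < y) : HasDerivAt (F2 n) (F3 n y) y := by
  refine HasDerivAt.fun_sum fun m _ => ?_
  have hpos : (0:ℝ) < y + m := by positivity
  have h := (((hasDerivAt_id' y).add_const (m:ℝ)).fun_pow 2).fun_inv (by positivity)
  refine h.congr_deriv ?_
  field_simp
  ring

lemma ineq1 {t : ℝ} (ht : 0 < t) :
    (t^2)⁻¹ + (t^3)⁻¹ - ((t+1)^2)⁻¹ - ((t+1)^3)⁻¹ < 2 * (t^3)⁻¹ := by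
  have h1 : (0:ℝ) < t + 1 := by linarith
  rw [← sub_pos]
  have key : 2 * (t^3)⁻¹ - ((t^2)⁻¹ + (t^3)⁻¹ - ((t+1)^2)⁻¹ - ((t+1)^3)⁻¹)
      = (2*t+1)/(t^3*(t+1)^3) := by field_simp; ring
  rw [key]; positivity

lemma ineq2 {t : ℝ} (ht : 0 < t) :
    2 * (t^3)⁻¹ < (t^2)⁻¹ + (t^3)⁻¹ + (2*t^4)⁻¹ - ((t+1)^2)⁻¹ - ((t+1)^3)⁻¹ - (2*(t+1)^4)⁻¹ := by
  have h1 : (0:ℝ) < t + 1 := by linarith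
  rw [← sub_pos]
  have key : (t^2)⁻¹ + (t^3)⁻¹ + (2*t^4)⁻¹ - ((t+1)^2)⁻¹ - ((t+1)^3)⁻¹ - (2*(t+1)^4)⁻¹
      - 2 * (t^3)⁻¹ = (2*t+1)/(2*t^4*(t+1)^4) := by field_simp; ring
  rw [key]; positivity

lemma tendsto_F2 {x : ℝ} (hx : 0 < x) : Tendsto (fun n => F2 n x) atTop (𝓝 (G2 x)) :=
  ((summable_inv_pow hx one_lt_two).hasSum.tendsto_sum_nat).comp (tendsto_add_atTop_nat 1)

lemma tendsto_F1 {x : ℝ} (hx : 0 < x) : Tendsto (fun n => F1 n x) atTop (𝓝 (G1 x)) := by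
  have hharm : ∀ n : ℕ, ((harmonic n : ℚ) : ℝ) = ∑ m ∈ Finset.range n, ((m:ℝ)+1)⁻¹ := by
    intro n
    rw [harmonic]
    push_cast
    simp [add_comm]
  have ha : Tendsto (fun n : ℕ => ((harmonic (n+1) : ℚ) : ℝ) - Real.log (n+1)) atTop
      (𝓝 Real.eulerMascheroniConstant) := by
    have := Real.tendsto_harmonic_sub_log.comp (tendsto_add_atTop_nat 1)
    refine this.congr fun n => ?_
    simp [Function.comp]
  have hb : Tendsto (fun n : ℕ => Real.log (n+1) - Real.log n) atTop (𝓝 0) :=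
    Real.tendsto_log_nat_add_one_sub_log
  have h1 : Tendsto (fun n : ℕ => Real.log n - ∑ m ∈ Finset.range (n+1), ((m:ℝ)+1)⁻¹) atTop
      (𝓝 (-Real.eulerMascheroniConstant)) := by
    have := (ha.add hb).neg
    rw [add_zero] at this
    refine this.congr fun n => ?_
    rw [← hharm]
    push_cast
    ring
  have h2 : Tendsto (fun n : ℕ => ∑ m ∈ Finset.range (n+1), (((m:ℝ)+1)⁻¹ - (x + m)⁻¹)) atTop
      (𝓝 (∑' m : ℕ, (((m:ℝ)+1)⁻¹ - (x + m)⁻¹))) :=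
    ((summable_G1term hx).hasSum.tendsto_sum_nat).comp (tendsto_add_atTop_nat 1)
  have := h1.add h2
  refine this.congr fun n => ?_
  simp only [F1, Finset.sum_sub_distrib]
  ring

lemma unif_shift {F : ℕ → ℝ → ℝ} {G : ℝ → ℝ} {s : Set ℝ}
    (h : TendstoUniformlyOn F G atTop s) :
    TendstoUniformlyOn (fun n => F (n+1)) G atTop s :=
  fun u hu => (tendsto_add_atTop_nat 1).eventually (h u hu)

lemma unif2 {r : ℝ} (hr : 0 < r) : TendstoUniformlyOn F2 G2 atTop (Set.Ioi r) := by
  have h := tendstoUniformlyOn_tsum_nat (f := fun (m : ℕ) (x : ℝ) => ((x + m)^2)⁻¹)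
    (u := fun m : ℕ => ((r + m)^2)⁻¹) (s := Set.Ioi r) (summable_inv_pow hr one_lt_two) ?_
  · exact unif_shift h
  · intro n x hx
    have hx' : r < x := hx
    have h0 : (0:ℝ) < x := hr.trans hx'
    rw [Real.norm_eq_abs, abs_of_pos (by positivity : (0:ℝ) < ((x+n)^2)⁻¹)]
    exact inv_anti₀ (by positivity) (by gcongr <;> linarith)

lemma unif3 {r : ℝ} (hr : 0 < r) : TendstoUniformlyOn F3 G3 atTop (Set.Ioi r) := by
  have h := tendstoUniformlyOn_tsum_nat (f := fun (m : ℕ) (x : ℝ) => (-2) * ((x + m)^3)⁻¹)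
    (u := fun m : ℕ => 2 * ((r + m)^3)⁻¹) (s := Set.Ioi r)
    ((summable_inv_pow hr (by norm_num : (1:ℕ) < 3)).mul_left 2) ?_
  · exact unif_shift h
  · intro n x hx
    have hx' : r < x := hx
    have h0 : (0:ℝ) < x := hr.trans hx'
    rw [Real.norm_eq_abs, abs_mul, abs_of_pos (by positivity : (0:ℝ) < ((x+n)^3)⁻¹),
      show |(-2 : ℝ)| = 2 by norm_num]
    exact mul_le_mul_of_nonneg_left (inv_anti₀ (by positivity) (by gcongr <;> linarith))
      (by norm_num)

lemma ball_subset_Ioi {a : ℝ} (ha : 0 < a) : Metric.ball a (a/2) ⊆ Set.Ioi (a/2) := by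
  intro y hy
  rw [Metric.mem_ball, Real.dist_eq] at hy
  have := abs_lt.mp hy
  rw [Set.mem_Ioi]
  linarith [this.1]

lemma loc_of_ball {F : ℕ → ℝ → ℝ} {G : ℝ → ℝ}
    (h : ∀ a : ℝ, 0 < a → TendstoUniformlyOn F G atTop (Metric.ball a (a/2))) :
    TendstoLocallyUniformlyOn F G atTop (Set.Ioi 0) := by
  intro u hu a ha
  rw [Set.mem_Ioi] at ha
  exact ⟨Metric.ball a (a/2), mem_nhdsWithin_of_mem_nhds
    (Metric.ball_mem_nhds a (half_pos ha)), h a ha u hu⟩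

lemma pos_of_mem_ball {a y : ℝ} (ha : 0 < a) (hy : y ∈ Metric.ball a (a/2)) : 0 < y :=
  lt_trans (half_pos ha) (ball_subset_Ioi ha hy)

lemma unif1_ball {a : ℝ} (ha : 0 < a) :
    TendstoUniformlyOn F1 G1 atTop (Metric.ball a (a/2)) := by
  have h2 : UniformCauchySeqOn F2 atTop (Metric.ball a (a/2)) :=
    ((unif2 (half_pos ha)).mono (ball_subset_Ioi ha)).uniformCauchySeqOn
  have hderiv : ∀ n : ℕ, ∀ y ∈ Metric.ball a (a/2), HasDerivAt (F1 n) (F2 n y) y :=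
    fun n y hy => hasDerivAt_F1 n (pos_of_mem_ball ha hy)
  have hCau : Cauchy (Filter.map (fun n => F1 n a) atTop) := (tendsto_F1 ha).cauchy_map
  exact (uniformCauchySeqOn_ball_of_deriv h2 hderiv hCau).tendstoUniformlyOn_of_tendsto
    fun y hy => tendsto_F1 (pos_of_mem_ball ha hy)

lemma hasDerivAt_logGamma {y : ℝ} (hy : 0 < y) :
    HasDerivAt (fun t => Real.log (Real.Gamma t)) (G1 y) y :=
  hasDerivAt_of_tendstoLocallyUniformlyOn isOpen_Ioi
    (loc_of_ball fun a ha => unif1_ball ha)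
    (Eventually.of_forall fun n z hz => hasDerivAt_F n hz)
    (fun z hz => Real.BohrMollerup.tendsto_log_gamma hz) hy

lemma hasDerivAt_G1 {y : ℝ} (hy : 0 < y) : HasDerivAt G1 (G2 y) y :=
  hasDerivAt_of_tendstoLocallyUniformlyOn isOpen_Ioi
    (loc_of_ball fun a ha => (unif2 (half_pos ha)).mono (ball_subset_Ioi ha))
    (Eventually.of_forall fun n z hz => hasDerivAt_F1 n hz)
    (fun z hz => tendsto_F1 hz) hy

lemma hasDerivAt_G2 {y : ℝ} (hy : 0 < y) : HasDerivAt G2 (G3 y) y :=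
  hasDerivAt_of_tendstoLocallyUniformlyOn isOpen_Ioi
    (loc_of_ball fun a ha => (unif3 (half_pos ha)).mono (ball_subset_Ioi ha))
    (Eventually.of_forall fun n z hz => hasDerivAt_F2 n hz)
    (fun z hz => tendsto_F2 hz) hy

noncomputable def Lb (t : ℝ) : ℝ := (t^2)⁻¹ + (t^3)⁻¹
noncomputable def Ub (t : ℝ) : ℝ := (t^2)⁻¹ + (t^3)⁻¹ + (2*t^4)⁻¹

lemma tendsto_inv_pow (x : ℝ) {k : ℕ} (hk : k ≠ 0) :
    Tendsto (fun n : ℕ => ((x + n)^k)⁻¹) atTop (𝓝 0) := by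
  have hxa : Tendsto (fun n : ℕ => x + (n:ℝ)) atTop atTop :=
    tendsto_atTop_add_const_left _ x tendsto_natCast_atTop_atTop
  exact ((tendsto_pow_atTop hk).comp hxa).inv_tendsto_atTop

lemma telescope {x : ℝ} {f : ℝ → ℝ}
    (hsum : Summable (fun i : ℕ => f (x + i) - f (x + i + 1)))
    (h0 : Tendsto (fun n : ℕ => f (x + n)) atTop (𝓝 0)) :
    HasSum (fun i : ℕ => f (x + i) - f (x + i + 1)) (f x) := by
  have hpart : ∀ n : ℕ, ∑ i ∈ Finset.range n, (f (x + i) - f (x + i + 1)) = f x - f (x + n) := by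
    intro n
    have hcast : ∀ i : ℕ, f (x + i + 1) = f (x + ((i + 1 : ℕ) : ℝ)) := by
      intro i; congr 1; push_cast; ring
    simp_rw [hcast]
    rw [Finset.sum_range_sub' (fun i : ℕ => f (x + i)) n]
    norm_num
  have h2 : Tendsto (fun n : ℕ => ∑ i ∈ Finset.range n, (f (x + i) - f (x + i + 1)))
      atTop (𝓝 (f x)) := by
    simp_rw [hpart]
    simpa using (tendsto_const_nhds (α := ℕ) (x := f x) (f := atTop)).sub h0
  have h3 := hsum.hasSum.tendsto_sum_nat
  have h4 : ∑' i : ℕ, (f (x + i) - f (x + i + 1)) = f x := tendsto_nhds_unique h3 h2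
  exact h4 ▸ hsum.hasSum

lemma Lb_mono {t : ℝ} (ht : 0 < t) : Lb (t+1) ≤ Lb t := by
  unfold Lb
  have h1 : (0:ℝ) < t + 1 := by linarith
  exact add_le_add (inv_anti₀ (by positivity) (by nlinarith))
    (inv_anti₀ (by positivity) (by nlinarith))

lemma Ub_mono {t : ℝ} (ht : 0 < t) : Ub (t+1) ≤ Ub t := by
  unfold Ub
  have h1 : (0:ℝ) < t + 1 := by linarith
  exact add_le_add (add_le_add (inv_anti₀ (by positivity) (by nlinarith))
    (inv_anti₀ (by positivity) (by nlinarith)))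
    (inv_anti₀ (by positivity)
      (by nlinarith [pow_le_pow_left₀ ht.le (by linarith : t ≤ t + 1) 4]))

lemma hasSum_Lb {x : ℝ} (hx : 0 < x) :
    HasSum (fun i : ℕ => Lb (x + i) - Lb (x + i + 1)) (Lb x) := by
  have hpos : ∀ i : ℕ, (0:ℝ) < x + i := fun i => by positivity
  have hsum : Summable (fun i : ℕ => Lb (x + i) - Lb (x + i + 1)) := by
    refine Summable.of_nonneg_of_le (fun i => ?_) (fun i => ?_)
      (((summable_inv_pow hx one_lt_two).add
        (summable_inv_pow hx (by norm_num : 1 < 3))) : Summable fun i : ℕ => Lb (x + i))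
    · have h := hpos i
      exact sub_nonneg.2 (Lb_mono h)
    · have h := hpos i
      have h2 : (0:ℝ) ≤ Lb (x + i + 1) := by unfold Lb; positivity
      simp only [Lb] at h2 ⊢
      linarith
  refine telescope hsum ?_
  have := (tendsto_inv_pow x (two_ne_zero)).add (tendsto_inv_pow x (three_ne_zero))
  simpa [Lb] using this

lemma hasSum_Ub {x : ℝ} (hx : 0 < x) :
    HasSum (fun i : ℕ => Ub (x + i) - Ub (x + i + 1)) (Ub x) := by
  have hpos : ∀ i : ℕ, (0:ℝ) < x + i := fun i => by positivity
  have hQ : Summable (fun i : ℕ => (2 * (x + i)^4)⁻¹) := by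
    refine ((summable_inv_pow hx (by norm_num : 1 < 4)).mul_left 2⁻¹).congr fun i => ?_
    rw [mul_inv]
  have hsum : Summable (fun i : ℕ => Ub (x + i) - Ub (x + i + 1)) := by
    refine Summable.of_nonneg_of_le (fun i => ?_) (fun i => ?_)
      ((((summable_inv_pow hx one_lt_two).add
        (summable_inv_pow hx (by norm_num : 1 < 3))).add hQ : Summable fun i : ℕ => Ub (x + i)))
    · have h := hpos i
      exact sub_nonneg.2 (Ub_mono h)
    · have h := hpos i
      have h2 : (0:ℝ) ≤ Ub (x + i + 1) := by unfold Ub; positivity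
      simp only [Ub] at h2 ⊢
      linarith
  refine telescope hsum ?_
  have h4 : Tendsto (fun n : ℕ => (2 * (x + n)^4)⁻¹) atTop (𝓝 0) := by
    have := (tendsto_inv_pow x (four_ne_zero)).const_mul (2:ℝ)⁻¹
    rw [mul_zero] at this
    refine this.congr fun n => ?_
    rw [mul_inv]
  have := ((tendsto_inv_pow x (two_ne_zero)).add (tendsto_inv_pow x (three_ne_zero))).add h4
  simpa [Ub] using this

lemma summable_T {x : ℝ} (hx : 0 < x) : Summable (fun m : ℕ => 2 * ((x + m)^3)⁻¹) :=
  (summable_inv_pow hx (by norm_num : 1 < 3)).mul_left 2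

lemma tsum_lower {x : ℝ} (hx : 0 < x) : Lb x < ∑' m : ℕ, 2 * ((x + m)^3)⁻¹ := by
  rw [← (hasSum_Lb hx).tsum_eq]
  refine Summable.tsum_lt_tsum (i := 0) (fun i => ?_) ?_ (hasSum_Lb hx).summable (summable_T hx)
  · have h : (0:ℝ) < x + i := by positivity
    have := ineq1 h
    simp only [Lb]
    linarith
  · have := ineq1 (show (0:ℝ) < x + (0:ℕ) by positivity)
    simp only [Lb]
    linarith

lemma tsum_upper {x : ℝ} (hx : 0 < x) : (∑' m : ℕ, 2 * ((x + m)^3)⁻¹) < Ub x := by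
  rw [← (hasSum_Ub hx).tsum_eq]
  refine Summable.tsum_lt_tsum (i := 0) (fun i => ?_) ?_ (summable_T hx) (hasSum_Ub hx).summable
  · have h : (0:ℝ) < x + i := by positivity
    have := ineq2 h
    simp only [Ub]
    linarith
  · have := ineq2 (show (0:ℝ) < x + (0:ℕ) by positivity)
    simp only [Ub]
    linarith

end Tetra

theorem tetragamma_bounds (x : ℝ) (hx : 0 < x) :
    -(1 / x ^ 2) - 1 / x ^ 3 - 1 / (2 * x ^ 4) < deriv (deriv psi) x ∧
    deriv (deriv psi) x < -(1 / x ^ 2) - 1 / x ^ 3 := by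
  have hx' : x ∈ Set.Ioi (0:ℝ) := hx
  have hpsi : Set.EqOn psi Tetra.G1 (Set.Ioi 0) :=
    fun y hy => (Tetra.hasDerivAt_logGamma hy).deriv
  have hdpsi : Set.EqOn (deriv psi) Tetra.G2 (Set.Ioi 0) := by
    intro y hy
    have h1 : psi =ᶠ[𝓝 y] Tetra.G1 :=
      Filter.eventuallyEq_of_mem (isOpen_Ioi.mem_nhds hy) hpsi
    rw [h1.deriv_eq, (Tetra.hasDerivAt_G1 hy).deriv]
  have hd2 : deriv (deriv psi) x = Tetra.G3 x := by
    have h1 : deriv psi =ᶠ[𝓝 x] Tetra.G2 :=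
      Filter.eventuallyEq_of_mem (isOpen_Ioi.mem_nhds hx') hdpsi
    rw [h1.deriv_eq, (Tetra.hasDerivAt_G2 hx).deriv]
  have hG3 : Tetra.G3 x = -∑' m : ℕ, 2 * ((x + m)^3)⁻¹ := by
    rw [Tetra.G3, ← tsum_neg]
    congr 1
    funext m
    ring
  have hlow := Tetra.tsum_lower hx
  have hup := Tetra.tsum_upper hx
  rw [hd2, hG3]
  simp only [Tetra.Lb, Tetra.Ub] at hlow hup
  have e1 : (1:ℝ) / x ^ 2 = (x^2)⁻¹ := one_div _
  have e2 : (1:ℝ) / x ^ 3 = (x^3)⁻¹ := one_div _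
  have e3 : (1:ℝ) / (2 * x ^ 4) = (2*x^4)⁻¹ := one_div _
  constructor <;> [linarith; linarith]
end

section
/- For u > 0 and real c ≠ 0, the derivative with respect to u of tanh(cu/2)/(c·tanh(u/2)) equals u/(4 sinh²(u/2) cosh²(cu/2)) · (sinh(u)/u − sinh(cu)/(cu)). -/
open Real

lemma hasDerivAt_tanh' (x : ℝ) :
    HasDerivAt Real.tanh (1 / Real.cosh x ^ 2) x := by
  have h := (Real.hasDerivAt_sinh x).div (Real.hasDerivAt_cosh x) ((Real.cosh_pos x).ne')
  have : (Real.cosh x * Real.cosh x - Real.sinh x * Real.sinh x) / Real.cosh x ^ 2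
      = 1 / Real.cosh x ^ 2 := by
    rw [show Real.cosh x * Real.cosh x - Real.sinh x * Real.sinh x
        = Real.cosh x ^ 2 - Real.sinh x ^ 2 by ring, Real.cosh_sq_sub_sinh_sq]
  rw [this] at h
  have heq : Real.tanh = fun y => Real.sinh y / Real.cosh y := by
    funext y; exact Real.tanh_eq_sinh_div_cosh y
  rw [heq]
  exact h

theorem tanh_ratio_deriv (c : ℝ) (hc : c ≠ 0) (u : ℝ) (hu : 0 < u) :
    deriv (fun v : ℝ => Real.tanh (c * v / 2) / (c * Real.tanh (v / 2))) u =
      u / (4 * Real.sinh (u / 2) ^ 2 * Real.cosh (c * u / 2) ^ 2) *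
        (Real.sinh u / u - Real.sinh (c * u) / (c * u)) := by
  have hs : Real.sinh (u / 2) ≠ 0 := ne_of_gt (Real.sinh_pos_iff.mpr (by linarith))
  have hch : Real.cosh (u / 2) ≠ 0 := (Real.cosh_pos _).ne'
  have hC : Real.cosh (c * u / 2) ≠ 0 := (Real.cosh_pos _).ne'
  have ht : Real.tanh (u / 2) ≠ 0 := by
    rw [Real.tanh_eq_sinh_div_cosh]; exact div_ne_zero hs hch
  -- derivative of inner linear maps
  have hlin1 : HasDerivAt (fun v : ℝ => c * v / 2) (c / 2) u := by
    simpa using ((hasDerivAt_id u).const_mul c).div_const 2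
  have hlin2 : HasDerivAt (fun v : ℝ => v / 2) ((1:ℝ) / 2) u := by
    simpa using (hasDerivAt_id u).div_const 2
  have h1 : HasDerivAt (fun v : ℝ => Real.tanh (c * v / 2))
      (1 / Real.cosh (c * u / 2) ^ 2 * (c / 2)) u :=
    by have := (_root_.hasDerivAt_tanh' (c * u / 2)).comp u hlin1; exact this
  have h2 : HasDerivAt (fun v : ℝ => c * Real.tanh (v / 2))
      (c * (1 / Real.cosh (u / 2) ^ 2 * (1 / 2))) u :=
    by have := (((_root_.hasDerivAt_tanh' (u / 2)).comp u hlin2)).const_mul c; exact this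
  have hden : c * Real.tanh (u / 2) ≠ 0 := mul_ne_zero hc ht
  have h := h1.div h2 hden
  rw [show (fun v : ℝ => Real.tanh (c * v / 2) / (c * Real.tanh (v / 2))) = (fun v : ℝ => Real.tanh (c * v / 2)) / (fun v : ℝ => c * Real.tanh (v / 2)) from rfl, h.deriv]
  rw [Real.tanh_eq_sinh_div_cosh, Real.tanh_eq_sinh_div_cosh]
  have hsu : Real.sinh u = 2 * Real.sinh (u / 2) * Real.cosh (u / 2) := by
    rw [show u = 2 * (u / 2) by ring, Real.sinh_two_mul]; ring_nf
  have hscu : Real.sinh (c * u) = 2 * Real.sinh (c * u / 2) * Real.cosh (c * u / 2) := by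
    rw [show c * u = 2 * (c * u / 2) by ring, Real.sinh_two_mul]; ring_nf
  rw [hsu, hscu]
  field_simp
  ring
end

section
/- For real s < t with 0 < t − s < 1, the function θ_{s,t;1}(x) = (ψ(x+t)−ψ(x+s))/(t−s) − (1+(2x+s+t))/(2(x+s)(x+t)) is completely monotonic on (−s, ∞), i.e., (−1)^n θ_{s,t;1}^{(n)}(x) ≥ 0 for all n ≥ 0 and x > −s. -/
open Filter Topology Finset Set


/-- Summability of `k ↦ 1/(q+k)^m` for `q > 0`, `m ≥ 2`. -/
lemma summable_inv_pow_shift {q : ℝ} (hq : 0 < q) {m : ℕ} (hm : 2 ≤ m) :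
    Summable (fun k : ℕ => ((q + k) ^ m)⁻¹) := by
  rw [← summable_nat_add_iff 1]
  have h : ∀ k : ℕ, ((q + (k + 1 : ℕ)) ^ m)⁻¹ ≤ ((k + 1 : ℝ) ^ 2)⁻¹ := by
    intro k
    have h1 : (1 : ℝ) ≤ q + (k + 1 : ℕ) := by
      push_cast; linarith [Nat.cast_nonneg (α := ℝ) k]
    have hk1 : (0 : ℝ) < (k + 1 : ℝ) := by positivity
    have h2 : ((k + 1 : ℝ)) ^ 2 ≤ (q + (k + 1 : ℕ)) ^ 2 := by
      apply pow_le_pow_left₀ hk1.le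
      push_cast; linarith
    have h3 : (q + (k + 1 : ℕ)) ^ 2 ≤ (q + (k + 1 : ℕ)) ^ m :=
      pow_le_pow_right₀ h1 hm
    exact inv_anti₀ (by positivity) (h2.trans h3)
  apply Summable.of_nonneg_of_le (fun k => by positivity) h
  have := Real.summable_one_div_nat_pow (p := 2).mpr one_lt_two
  simpa [one_div] using (summable_nat_add_iff 1).mpr this

/-- Derivative of `u ↦ (u^(m+1))⁻¹`. -/
lemma hasDerivAt_inv_pow' (m : ℕ) {u : ℝ} (hu : u ≠ 0) :
    HasDerivAt (fun u : ℝ => ((u ^ (m + 1))⁻¹)) (-(m + 1) * (u ^ (m + 2))⁻¹) u := by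
  have h := hasDerivAt_zpow (-(m + 1) : ℤ) u (Or.inl hu)
  have e1 : ∀ v : ℝ, v ≠ 0 → v ^ (-(m + 1) : ℤ) = (v ^ (m + 1))⁻¹ := by
    intro v hv; rw [zpow_neg]; norm_cast
  have e2 : u ^ ((-(m + 1) : ℤ) - 1) = (u ^ (m + 2))⁻¹ := by
    have : ((-(m + 1) : ℤ) - 1) = -(m + 2 : ℕ) := by push_cast; ring
    rw [this, zpow_neg, zpow_natCast]
  have : HasDerivAt (fun u : ℝ => (u : ℝ) ^ (-(m + 1) : ℤ)) (-(m+1) * (u ^ (m + 2))⁻¹) u := by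
    refine h.congr_deriv ?_
    rw [e2]; push_cast; ring
  apply this.congr_of_eventuallyEq
  filter_upwards [eventually_ne_nhds hu] with v hv
  rw [e1 v hv]

/-- Derivative of `y ↦ ((y+c)^(m+1))⁻¹`. -/


lemma hasDerivAt_inv_pow_sub (m : ℕ) {c r : ℝ} (h : c - r ≠ 0) :
    HasDerivAt (fun z : ℝ => ((c - z) ^ (m + 1))⁻¹) ((m + 1) * ((c - r) ^ (m + 2))⁻¹) r := by
  have h0 := (hasDerivAt_inv_pow' m h).comp r ((hasDerivAt_const r c).sub (hasDerivAt_id r))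
  have h1 : HasDerivAt (fun z : ℝ => ((c - z) ^ (m + 1))⁻¹)
      (-(↑m + 1) * ((c - r) ^ (m + 2))⁻¹ * (0 - 1)) r := h0
  convert h1 using 1; ring

lemma hasDerivAt_inv_pow_add (m : ℕ) {c r : ℝ} (h : c + r ≠ 0) :
    HasDerivAt (fun z : ℝ => ((c + z) ^ (m + 1))⁻¹) (-(m + 1) * ((c + r) ^ (m + 2))⁻¹) r := by
  have h0 := (hasDerivAt_inv_pow' m h).comp r ((hasDerivAt_const r c).add (hasDerivAt_id r))
  have h1 : HasDerivAt (fun z : ℝ => ((c + z) ^ (m + 1))⁻¹)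
      (-(↑m + 1) * ((c + r) ^ (m + 2))⁻¹ * (0 + 1)) r := h0
  convert h1 using 1; ring

/-- Key convexity inequality. -/
lemma key_ineq {y v : ℝ} (hy : 0 < y) (hv : 0 < v) (hv1 : v < 1) (m : ℕ) :
    0 ≤ (1 - v) * ((y ^ (m + 1))⁻¹) - (1 + v) * (((y + v) ^ (m + 1))⁻¹)
      + (1 + v) * (((y + 1) ^ (m + 1))⁻¹) - (1 - v) * (((y + 1 + v) ^ (m + 1))⁻¹) := by
  set R : ℝ := (1 + v) / 2 with hR
  set ρ : ℝ := (1 - v) / 2 with hρ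
  set c : ℝ := y + (1 + v) / 2 with hc
  have hR0 : 0 < R := by rw [hR]; linarith
  have hρ0 : 0 < ρ := by rw [hρ]; linarith
  have hρR : ρ < R := by rw [hρ, hR]; linarith
  set q : ℝ → ℝ := fun r => ((c - r) ^ (m + 1))⁻¹ - ((c + r) ^ (m + 1))⁻¹ with hq
  have hpos : ∀ r ∈ Icc (0:ℝ) R, 0 < c - r ∧ 0 < c + r := by
    intro r hr
    constructor
    · have : r ≤ R := hr.2; rw [hc]; rw [hR] at this; linarith
    · have : 0 ≤ r := hr.1; rw [hc]; linarith
  have hconv : ConvexOn ℝ (Icc (0:ℝ) R) q := by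
    have hint : interior (Icc (0:ℝ) R) = Ioo 0 R := interior_Icc
    apply convexOn_of_hasDerivWithinAt2_nonneg (convex_Icc _ _)
      (f' := fun r => (m + 1) * ((c - r) ^ (m + 2))⁻¹ + (m + 1) * ((c + r) ^ (m + 2))⁻¹)
      (f'' := fun r => ((m:ℝ) + 1) * (((m:ℝ) + 2) * ((c - r) ^ (m + 3))⁻¹)
        + ((m:ℝ) + 1) * (-((m:ℝ) + 2) * ((c + r) ^ (m + 3))⁻¹))
    · apply ContinuousOn.sub
      · apply ContinuousOn.inv₀
        · fun_prop
        · intro r hr; exact pow_ne_zero _ (hpos r hr).1.ne'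
      · apply ContinuousOn.inv₀
        · fun_prop
        · intro r hr; exact pow_ne_zero _ (hpos r hr).2.ne'
    · intro r hr
      rw [hint] at hr
      have h1 : 0 < c - r := (hpos r (Ioo_subset_Icc_self hr)).1
      have h2 : 0 < c + r := (hpos r (Ioo_subset_Icc_self hr)).2
      have d1 := hasDerivAt_inv_pow_sub m h1.ne'
      have d2 := hasDerivAt_inv_pow_add m h2.ne'
      have := d1.sub d2
      have heq : ((m:ℝ) + 1) * ((c - r) ^ (m + 2))⁻¹ - (-((m:ℝ) + 1) * ((c + r) ^ (m + 2))⁻¹)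
          = (m + 1) * ((c - r) ^ (m + 2))⁻¹ + (m + 1) * ((c + r) ^ (m + 2))⁻¹ := by ring
      rw [heq] at this
      exact this.hasDerivWithinAt
    · intro r hr
      rw [hint] at hr
      have h1 : 0 < c - r := (hpos r (Ioo_subset_Icc_self hr)).1
      have h2 : 0 < c + r := (hpos r (Ioo_subset_Icc_self hr)).2
      have d1 : HasDerivAt (fun z : ℝ => ((c - z) ^ (m + 2))⁻¹)
          (((m:ℝ) + 2) * ((c - r) ^ (m + 3))⁻¹) r := by
        have := hasDerivAt_inv_pow_sub (m + 1) h1.ne'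
        convert this using 2 <;> push_cast <;> ring
      have d2 : HasDerivAt (fun z : ℝ => ((c + z) ^ (m + 2))⁻¹)
          (-((m:ℝ) + 2) * ((c + r) ^ (m + 3))⁻¹) r := by
        have := hasDerivAt_inv_pow_add (m + 1) h2.ne'
        convert this using 2 <;> push_cast <;> ring
      exact ((d1.const_mul ((m:ℝ) + 1)).add (d2.const_mul ((m:ℝ) + 1))).hasDerivWithinAt
    · intro r hr
      rw [hint] at hr
      have h1 : 0 < c - r := (hpos r (Ioo_subset_Icc_self hr)).1
      have h2 : 0 < c + r := (hpos r (Ioo_subset_Icc_self hr)).2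
      have hle : ((c + r) ^ (m + 3))⁻¹ ≤ ((c - r) ^ (m + 3))⁻¹ :=
        inv_anti₀ (by positivity) (pow_le_pow_left₀ h1.le (by linarith [hr.1]) _)
      have hmm : (0:ℝ) ≤ ((m:ℝ) + 1) * ((m:ℝ) + 2) := by positivity
      nlinarith [hle, hmm]
  have h0m : (0:ℝ) ∈ Icc (0:ℝ) R := ⟨le_refl _, hR0.le⟩
  have hRm : R ∈ Icc (0:ℝ) R := ⟨hR0.le, le_refl _⟩
  have hw1 : (0:ℝ) ≤ 1 - ρ / R := by
    have : ρ / R < 1 := (div_lt_one hR0).mpr hρR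
    linarith
  have hw2 : (0:ℝ) ≤ ρ / R := by positivity
  have happ := hconv.2 h0m hRm hw1 hw2 (by ring)
  have hval : (1 - ρ / R) • (0:ℝ) + (ρ / R) • R = ρ := by
    field_simp
    rw [smul_eq_mul, smul_eq_mul, mul_zero, zero_add, div_mul_cancel₀ _ hR0.ne']
  rw [hval] at happ
  have hq0 : q 0 = 0 := by simp [hq]
  rw [hq0] at happ
  have hkey : R * q ρ ≤ ρ * q R := by
    simp only [smul_eq_mul, mul_zero, zero_add] at happ
    calc R * q ρ ≤ R * (ρ / R * q R) := by
          apply mul_le_mul_of_nonneg_left happ hR0.le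
      _ = ρ * q R := by field_simp
  have e1 : c - R = y := by rw [hc, hR]; ring_nf
  have e2 : c + R = y + 1 + v := by rw [hc, hR]; ring
  have e3 : c - ρ = y + v := by rw [hc, hρ]; ring
  have e4 : c + ρ = y + 1 := by rw [hc, hρ]; ring
  have hqR : q R = (y ^ (m+1))⁻¹ - ((y + 1 + v) ^ (m+1))⁻¹ := by
    simp only [hq]; rw [e1, e2]
  have hqρ : q ρ = ((y + v) ^ (m+1))⁻¹ - ((y + 1) ^ (m+1))⁻¹ := by
    simp only [hq]; rw [e3, e4]
  rw [hqR, hqρ, hρ, hR] at hkey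
  linarith [hkey]

lemma hasDerivAt_log_shift {x c : ℝ} (h : 0 < x + c) :
    HasDerivAt (fun z : ℝ => Real.log (z + c)) ((x + c)⁻¹) x := by
  simpa [Function.comp_def] using (Real.hasDerivAt_log h.ne').comp x ((hasDerivAt_id x).add_const c)

lemma inv_sub_inv_nonneg {A B : ℝ} (hA : 0 < A) (hAB : A ≤ B) : 0 ≤ A⁻¹ - B⁻¹ :=
  sub_nonneg.mpr (inv_anti₀ hA hAB)

lemma inv_sub_inv_le {q A B : ℝ} (hq : 0 < q) (hqA : q ≤ A) (hAB : A ≤ B) :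
    A⁻¹ - B⁻¹ ≤ (B - A) * ((q ^ 2)⁻¹) := by
  have hA : 0 < A := hq.trans_le hqA
  have hB : 0 < B := hA.trans_le hAB
  have e : A⁻¹ - B⁻¹ = (B - A) * (A * B)⁻¹ := by field_simp
  rw [e]
  apply mul_le_mul_of_nonneg_left _ (by linarith)
  apply inv_anti₀ (by positivity)
  calc q ^ 2 = q * q := sq q
    _ ≤ A * B := mul_le_mul hqA (hqA.trans hAB) hq.le hA.le

/-- The difference of digamma values as a series. -/
lemma psi_diff (s t : ℝ) (hst : s < t) {x : ℝ} (hx : -s < x) :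
    psi (x + t) - psi (x + s) = ∑' k : ℕ, ((x + s + k)⁻¹ - (x + t + k)⁻¹) := by
  set c : ℝ := (x - s) / 2 with hcdef
  have hc1 : -s < c := by rw [hcdef]; linarith
  have hc2 : c < x := by rw [hcdef]; linarith
  have hq : 0 < c + s := by linarith
  set q : ℝ := c + s with hqdef
  set F : ℕ → ℝ → ℝ := fun n y =>
    (t - s) * Real.log n + ∑ m ∈ Finset.range (n + 1),
      (Real.log (y + s + m) - Real.log (y + t + m)) with hF
  set F' : ℕ → ℝ → ℝ := fun n y =>
    ∑ m ∈ Finset.range (n + 1), ((y + s + m)⁻¹ - (y + t + m)⁻¹) with hF'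
  set D : ℝ → ℝ := fun y => ∑' k : ℕ, ((y + s + k)⁻¹ - (y + t + k)⁻¹) with hD
  -- positivity on Ioi c
  have hpos : ∀ y ∈ Ioi c, ∀ m : ℕ, 0 < y + s + m ∧ 0 < y + t + m := by
    intro y hy m
    have h0 : (0:ℝ) ≤ m := Nat.cast_nonneg m
    have hy' : c < y := hy
    constructor <;> nlinarith
  -- uniform convergence of partial sums of derivatives
  have hunif : TendstoUniformlyOn (fun N y => ∑ k ∈ Finset.range N,
      ((y + s + k)⁻¹ - (y + t + k)⁻¹)) D atTop (Ioi c) := by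
    apply tendstoUniformlyOn_tsum_nat (u := fun k => (t - s) * ((q + k) ^ 2)⁻¹)
    · apply Summable.mul_left
      exact summable_inv_pow_shift hq le_rfl
    · intro k y hy
      have h1 := (hpos y hy k).1
      have h2 := (hpos y hy k).2
      have hqA : q + k ≤ y + s + k := by
        have : c < y := hy
        rw [hqdef]; push_cast; linarith
      have hAB : y + s + k ≤ y + t + k := by linarith
      have hqk : 0 < q + (k:ℝ) := by positivity
      rw [Real.norm_eq_abs, abs_of_nonneg (inv_sub_inv_nonneg h1 hAB)]
      have := inv_sub_inv_le hqk hqA hAB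
      calc (y + s + k)⁻¹ - (y + t + k)⁻¹ ≤ (y + t + k - (y + s + k)) * ((q + k) ^ 2)⁻¹ := this
        _ = (t - s) * ((q + k) ^ 2)⁻¹ := by ring
  have hunif' : TendstoUniformlyOn (fun n y => F' n y) D atTop (Ioi c) := by
    intro u hu
    exact (tendsto_add_atTop_nat 1).eventually (hunif u hu)
  -- derivative of the partial sums
  have hderiv : ∀ n : ℕ, ∀ y ∈ Ioi c, HasDerivAt (F n) (F' n y) y := by
    intro n y hy
    have hsum : HasDerivAt (fun z => ∑ m ∈ Finset.range (n + 1),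
        (Real.log (z + s + m) - Real.log (z + t + m)))
        (∑ m ∈ Finset.range (n + 1), ((y + s + m)⁻¹ - (y + t + m)⁻¹)) y := by
      apply HasDerivAt.fun_sum
      intro m _
      have h1 := (hpos y hy m).1
      have h2 := (hpos y hy m).2
      have e1 : y + s + (m:ℝ) = y + (s + m) := by ring
      have d1 : HasDerivAt (fun z : ℝ => Real.log (z + (s + m))) ((y + (s + m))⁻¹) y :=
        hasDerivAt_log_shift (by linarith)
      have d2 : HasDerivAt (fun z : ℝ => Real.log (z + (t + m))) ((y + (t + m))⁻¹) y :=
        hasDerivAt_log_shift (by linarith)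
      have := d1.fun_sub d2
      convert this using 2 <;> ring
    have := (hasDerivAt_const y ((t - s) * Real.log n)).add hsum
    simpa only [hF, hF', zero_add, Pi.add_def] using this
  -- pointwise convergence to the Gamma difference
  have htend : ∀ y ∈ Ioi c, Tendsto (fun n => F n y) atTop
      (𝓝 (Real.log (Real.Gamma (y + t)) - Real.log (Real.Gamma (y + s)))) := by
    intro y hy
    have hyt : 0 < y + t := by have := (hpos y hy 0).2; simpa using this
    have hys : 0 < y + s := by have := (hpos y hy 0).1; simpa using this
    have h := (Real.BohrMollerup.tendsto_log_gamma hyt).sub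
      (Real.BohrMollerup.tendsto_log_gamma hys)
    have heq : (fun n => Real.BohrMollerup.logGammaSeq (y + t) n
        - Real.BohrMollerup.logGammaSeq (y + s) n) = fun n => F n y := by
      funext n
      simp only [Real.BohrMollerup.logGammaSeq, hF]
      rw [Finset.sum_sub_distrib]
      ring
    rwa [heq] at h
  -- conclude: G has derivative D x
  have hG : HasDerivAt (fun y => Real.log (Real.Gamma (y + t))
      - Real.log (Real.Gamma (y + s))) (D x) x :=
    hasDerivAt_of_tendstoLocallyUniformlyOn isOpen_Ioi hunif'.tendstoLocallyUniformlyOn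
      (Eventually.of_forall hderiv) htend hc2
  -- G also has derivative psi (x+t) - psi (x+s)
  have hxt : 0 < x + t := by linarith
  have hxs : 0 < x + s := by linarith
  have hdt : DifferentiableAt ℝ (fun u => Real.log (Real.Gamma u)) (x + t) := by
    apply DifferentiableAt.log
    · exact Real.differentiableAt_Gamma fun m =>
        ne_of_gt (lt_of_le_of_lt (by simp [Nat.cast_nonneg] : -(m:ℝ) ≤ 0) hxt)
    · exact (Real.Gamma_pos_of_pos hxt).ne'
  have hds : DifferentiableAt ℝ (fun u => Real.log (Real.Gamma u)) (x + s) := by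
    apply DifferentiableAt.log
    · exact Real.differentiableAt_Gamma fun m =>
        ne_of_gt (lt_of_le_of_lt (by simp [Nat.cast_nonneg] : -(m:ℝ) ≤ 0) hxs)
    · exact (Real.Gamma_pos_of_pos hxs).ne'
  have ht' : HasDerivAt (fun y : ℝ => Real.log (Real.Gamma (y + t))) (psi (x + t)) x :=
    HasDerivAt.comp_add_const x t hdt.hasDerivAt
  have hs' : HasDerivAt (fun y : ℝ => Real.log (Real.Gamma (y + s))) (psi (x + s)) x :=
    HasDerivAt.comp_add_const x s hds.hasDerivAt
  exact (ht'.sub hs').unique hG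

lemma hasDerivAt_inv_pow_shift (m : ℕ) {x c : ℝ} (h : 0 < x + c) :
    HasDerivAt (fun y : ℝ => (((y + c) ^ (m + 1))⁻¹)) (-(m + 1) * ((x + c) ^ (m + 2))⁻¹) x := by
  have := (hasDerivAt_inv_pow' m h.ne').comp x ((hasDerivAt_id x).add_const c)
  simpa [Function.comp_def] using this

/-- The summand. -/
noncomputable def gse (s t : ℝ) (n k : ℕ) (x : ℝ) : ℝ :=
  ((x + (s + k)) ^ (n + 1))⁻¹ - ((x + (t + k)) ^ (n + 1))⁻¹
    - ((1 + (t - s)) * ((x + (s + k)) ^ (n + 1))⁻¹ - (1 - (t - s)) * ((x + (t + k)) ^ (n + 1))⁻¹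
      - (1 + (t - s)) * ((x + (s + k + 1)) ^ (n + 1))⁻¹
      + (1 - (t - s)) * ((x + (t + k + 1)) ^ (n + 1))⁻¹) / 2

/-- The series. -/
noncomputable def Th (s t : ℝ) (n : ℕ) (x : ℝ) : ℝ := ∑' k : ℕ, gse s t n k x

section params
variable {s t : ℝ}

lemma gse_nonneg (hst : s < t) (h1 : t - s < 1) (n k : ℕ) {x : ℝ} (hx : -s < x) : 0 ≤ gse s t n k x := by
  have hy : (0:ℝ) < x + s + k := by
    have := Nat.cast_nonneg (α := ℝ) k; linarith
  have hkey := key_ineq hy (by linarith : (0:ℝ) < t - s) h1 n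
  have e1 : x + (s + (k:ℝ)) = x + s + k := by ring
  have e2 : x + (t + (k:ℝ)) = x + s + k + (t - s) := by ring
  have e3 : x + (s + (k:ℝ) + 1) = x + s + k + 1 := by ring
  have e4 : x + (t + (k:ℝ) + 1) = x + s + k + 1 + (t - s) := by ring
  simp only [gse, e1, e2, e3, e4]
  linarith [hkey]

lemma gse_abs_le (hst : s < t) (h1 : t - s < 1) (n k : ℕ) {q y : ℝ} (hq : 0 < q) (hqy : q ≤ y + s) :
    |gse s t n k y| ≤ 6 * ((q + k) ^ (n + 1))⁻¹ := by
  have hv0 : (0:ℝ) < t - s := by linarith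
  have hk : (0:ℝ) ≤ k := Nat.cast_nonneg k
  have hqk : (0:ℝ) < q + k := by linarith
  set M : ℝ := ((q + k) ^ (n + 1))⁻¹ with hM
  have hM0 : 0 < M := by rw [hM]; positivity
  have bound : ∀ c : ℝ, q + k ≤ y + c → 0 < ((y + c) ^ (n+1))⁻¹ ∧ ((y + c) ^ (n+1))⁻¹ ≤ M := by
    intro c hc
    have h0 : 0 < y + c := lt_of_lt_of_le hqk hc
    refine ⟨by positivity, ?_⟩
    rw [hM]
    exact inv_anti₀ (by positivity) (pow_le_pow_left₀ hqk.le hc _)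
  have b1 := bound (s + k) (by linarith)
  have b2 := bound (t + k) (by linarith)
  have b3 := bound (s + k + 1) (by linarith)
  have b4 := bound (t + k + 1) (by linarith)
  have hcoefA : (1:ℝ) + (t - s) ≤ 2 := by linarith
  have hcoefA0 : (0:ℝ) ≤ 1 + (t - s) := by linarith
  have hcoefB : (1:ℝ) - (t - s) ≤ 1 := by linarith
  have hcoefB0 : (0:ℝ) ≤ 1 - (t - s) := by linarith
  have pA1 : (1 + (t - s)) * ((y + (s + k)) ^ (n+1))⁻¹ ≤ 2 * M :=
    mul_le_mul hcoefA b1.2 b1.1.le (by norm_num)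
  have pA1' : 0 ≤ (1 + (t - s)) * ((y + (s + k)) ^ (n+1))⁻¹ := mul_nonneg hcoefA0 b1.1.le
  have pA3 : (1 + (t - s)) * ((y + (s + k + 1)) ^ (n+1))⁻¹ ≤ 2 * M :=
    mul_le_mul hcoefA b3.2 b3.1.le (by norm_num)
  have pA3' : 0 ≤ (1 + (t - s)) * ((y + (s + k + 1)) ^ (n+1))⁻¹ := mul_nonneg hcoefA0 b3.1.le
  have pB2 : (1 - (t - s)) * ((y + (t + k)) ^ (n+1))⁻¹ ≤ 1 * M :=
    mul_le_mul hcoefB b2.2 b2.1.le (by norm_num)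
  have pB2' : 0 ≤ (1 - (t - s)) * ((y + (t + k)) ^ (n+1))⁻¹ := mul_nonneg hcoefB0 b2.1.le
  have pB4 : (1 - (t - s)) * ((y + (t + k + 1)) ^ (n+1))⁻¹ ≤ 1 * M :=
    mul_le_mul hcoefB b4.2 b4.1.le (by norm_num)
  have pB4' : 0 ≤ (1 - (t - s)) * ((y + (t + k + 1)) ^ (n+1))⁻¹ := mul_nonneg hcoefB0 b4.1.le
  rw [abs_le]
  constructor
  · simp only [gse]
    linarith [b1.1, b1.2, b2.1, b2.2, b3.1, b3.2, b4.1, b4.2]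
  · simp only [gse]
    linarith [b1.1, b1.2, b2.1, b2.2, b3.1, b3.2, b4.1, b4.2]

lemma summable_d (hst : s < t) {x : ℝ} (hx : -s < x) :
    Summable (fun k : ℕ => (x + s + k)⁻¹ - (x + t + k)⁻¹) := by
  have hp : (0:ℝ) < x + s := by linarith
  apply Summable.of_norm_bounded (g := fun k : ℕ => (t - s) * (((x + s) + k) ^ 2)⁻¹)
    ((summable_inv_pow_shift hp le_rfl).mul_left _)
  intro k
  have hk : (0:ℝ) ≤ k := Nat.cast_nonneg k
  have h1' : (0:ℝ) < x + s + k := by linarith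
  have hAB : x + s + k ≤ x + t + k := by linarith
  rw [Real.norm_eq_abs, abs_of_nonneg (inv_sub_inv_nonneg h1' hAB)]
  have hqk : (0:ℝ) < x + s + k := h1'
  have := inv_sub_inv_le hqk le_rfl hAB
  calc (x + s + k)⁻¹ - (x + t + k)⁻¹ ≤ (x + t + k - (x + s + k)) * (((x + s + k)) ^ 2)⁻¹ := this
    _ = (t - s) * (((x + s) + k) ^ 2)⁻¹ := by ring_nf

lemma summable_gse (hst : s < t) (h1 : t - s < 1) (n : ℕ) {x : ℝ} (hx : -s < x) :
    Summable (fun k : ℕ => gse s t n k x) := by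
  have hp : (0:ℝ) < x + s := by linarith
  match n with
  | Nat.succ m =>
    apply Summable.of_norm_bounded (g := fun k : ℕ => 6 * (((x + s) + k) ^ (m + 2))⁻¹)
      ((summable_inv_pow_shift hp (by omega)).mul_left _)
    intro k
    have := gse_abs_le hst h1 (m + 1) k hp le_rfl
    simpa using this
  | 0 =>
    -- refined bound
    apply Summable.of_norm_bounded (g := fun k : ℕ => 2 * (((x + s) + k) ^ 2)⁻¹)
      ((summable_inv_pow_shift hp le_rfl).mul_left _)
    intro k
    have hk : (0:ℝ) ≤ k := Nat.cast_nonneg k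
    have hA : (0:ℝ) < x + (s + k) := by linarith
    have hB : (0:ℝ) < x + (t + k) := by linarith
    have hv0 : (0:ℝ) < t - s := by linarith
    set M : ℝ := (((x + s) + k) ^ 2)⁻¹ with hM
    have hd1 : 0 ≤ (x + (s + k))⁻¹ - (x + (t + k))⁻¹ :=
      inv_sub_inv_nonneg hA (by linarith)
    have hd2 : (x + (s + k))⁻¹ - (x + (t + k))⁻¹ ≤ (t - s) * M := by
      have := inv_sub_inv_le hA le_rfl (by linarith : x + (s + k) ≤ x + (t + k))
      calc (x + (s + k))⁻¹ - (x + (t + k))⁻¹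
          ≤ (x + (t + k) - (x + (s + k))) * ((x + (s + k)) ^ 2)⁻¹ := this
        _ = (t - s) * M := by rw [hM]; ring_nf
    have he1 : 0 ≤ (x + (s + k))⁻¹ - (x + (s + k + 1))⁻¹ :=
      inv_sub_inv_nonneg hA (by linarith)
    have he2 : (x + (s + k))⁻¹ - (x + (s + k + 1))⁻¹ ≤ 1 * M := by
      have := inv_sub_inv_le hA le_rfl (by linarith : x + (s + k) ≤ x + (s + k + 1))
      calc (x + (s + k))⁻¹ - (x + (s + k + 1))⁻¹
          ≤ (x + (s + k + 1) - (x + (s + k))) * ((x + (s + k)) ^ 2)⁻¹ := this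
        _ = 1 * M := by rw [hM]; ring_nf
    have hf1 : 0 ≤ (x + (t + k))⁻¹ - (x + (t + k + 1))⁻¹ :=
      inv_sub_inv_nonneg hB (by linarith)
    have hf2 : (x + (t + k))⁻¹ - (x + (t + k + 1))⁻¹ ≤ 1 * M := by
      have := inv_sub_inv_le hA (by linarith : x + (s + k) ≤ x + (t + k))
        (by linarith : x + (t + k) ≤ x + (t + k + 1))
      calc (x + (t + k))⁻¹ - (x + (t + k + 1))⁻¹
          ≤ (x + (t + k + 1) - (x + (t + k))) * ((x + (s + k)) ^ 2)⁻¹ := this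
        _ = 1 * M := by rw [hM]; ring_nf
    have hgse : gse s t 0 k x = ((x + (s + k))⁻¹ - (x + (t + k))⁻¹)
        - ((1 + (t - s)) * ((x + (s + k))⁻¹ - (x + (s + k + 1))⁻¹)
           - (1 - (t - s)) * ((x + (t + k))⁻¹ - (x + (t + k + 1))⁻¹)) / 2 := by
      simp only [gse, zero_add, pow_one]
      ring
    rw [Real.norm_eq_abs, hgse, abs_le]
    have hM0 : 0 < M := by rw [hM]; positivity
    have hdM : (x + (s + k))⁻¹ - (x + (t + k))⁻¹ ≤ 1 * M := by
      have : (t - s) * M ≤ 1 * M := mul_le_mul_of_nonneg_right (by linarith) hM0.le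
      linarith
    have pA : (1 + (t - s)) * ((x + (s + k))⁻¹ - (x + (s + k + 1))⁻¹) ≤ 2 * M :=
      mul_le_mul (by linarith) (by linarith [he2]) he1 (by norm_num)
    have pA' : 0 ≤ (1 + (t - s)) * ((x + (s + k))⁻¹ - (x + (s + k + 1))⁻¹) :=
      mul_nonneg (by linarith) he1
    have pB : (1 - (t - s)) * ((x + (t + k))⁻¹ - (x + (t + k + 1))⁻¹) ≤ 1 * M :=
      mul_le_mul (by linarith) (by linarith [hf2]) hf1 (by norm_num)
    have pB' : 0 ≤ (1 - (t - s)) * ((x + (t + k))⁻¹ - (x + (t + k + 1))⁻¹) :=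
      mul_nonneg (by linarith) hf1
    constructor
    · linarith
    · linarith

lemma hasDerivAt_Th (hst : s < t) (h1 : t - s < 1) (n : ℕ) {x : ℝ} (hx : -s < x) :
    HasDerivAt (Th s t n) (-((n:ℝ) + 1) * Th s t (n + 1) x) x := by
  set c : ℝ := (x - s) / 2 with hcdef
  have hc1 : -s < c := by rw [hcdef]; linarith
  have hc2 : c < x := by rw [hcdef]; linarith
  have hq : (0:ℝ) < c + s := by linarith
  have hmain : HasDerivAt (fun z => ∑' k : ℕ, gse s t n k z)
      (∑' k : ℕ, (-((n:ℝ) + 1) * gse s t (n + 1) k x)) x := by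
    apply hasDerivAt_tsum_of_isPreconnected
      (g := fun (k : ℕ) (z : ℝ) => gse s t n k z)
      (g' := fun (k : ℕ) (y : ℝ) => -((n:ℝ) + 1) * gse s t (n + 1) k y)
      (u := fun k : ℕ => (6 * ((n:ℝ) + 1)) * (((c + s) + k) ^ (n + 2))⁻¹)
      (((summable_inv_pow_shift hq (by omega)).mul_left _))
      isOpen_Ioi (convex_Ioi c).isPreconnected
      (fun k y hy => ?_) (fun k y hy => ?_) hc2 (summable_gse hst h1 n hx) hc2
    · -- HasDerivAt for each term
      have hy' : c < y := hy
      have hk : (0:ℝ) ≤ k := Nat.cast_nonneg k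
      have p1 : (0:ℝ) < y + (s + k) := by linarith
      have p2 : (0:ℝ) < y + (t + k) := by linarith
      have p3 : (0:ℝ) < y + (s + k + 1) := by linarith
      have p4 : (0:ℝ) < y + (t + k + 1) := by linarith
      have d1 := hasDerivAt_inv_pow_shift n p1
      have d2 := hasDerivAt_inv_pow_shift n p2
      have d3 := hasDerivAt_inv_pow_shift n p3
      have d4 := hasDerivAt_inv_pow_shift n p4
      have H := (d1.sub d2).sub
        (((((d1.const_mul (1 + (t - s))).sub (d2.const_mul (1 - (t - s)))).sub
          (d3.const_mul (1 + (t - s)))).add (d4.const_mul (1 - (t - s)))).div_const 2)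
      show HasDerivAt (fun z =>
          ((z + (s + (k:ℝ))) ^ (n + 1))⁻¹ - ((z + (t + k)) ^ (n + 1))⁻¹
          - ((1 + (t - s)) * ((z + (s + k)) ^ (n + 1))⁻¹
             - (1 - (t - s)) * ((z + (t + k)) ^ (n + 1))⁻¹
             - (1 + (t - s)) * ((z + (s + k + 1)) ^ (n + 1))⁻¹
             + (1 - (t - s)) * ((z + (t + k + 1)) ^ (n + 1))⁻¹) / 2)
        (-((n:ℝ) + 1) * gse s t (n + 1) k y) y
      refine H.congr_deriv ?_
      simp only [gse]
      push_cast
      ring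
    · -- bound
      have hy' : c < y := hy
      have hb := gse_abs_le hst h1 (n + 1) k hq (by linarith : c + s ≤ y + s)
      rw [Real.norm_eq_abs, abs_mul]
      have h6 : |(-((n:ℝ) + 1))| = (n:ℝ) + 1 := by
        rw [abs_neg, abs_of_nonneg]; positivity
      rw [h6]
      calc ((n:ℝ) + 1) * |gse s t (n + 1) k y|
          ≤ ((n:ℝ) + 1) * (6 * (((c + s) + k) ^ (n + 1 + 1))⁻¹) := by
            apply mul_le_mul_of_nonneg_left hb (by positivity)
        _ = (6 * ((n:ℝ) + 1)) * (((c + s) + k) ^ (n + 2))⁻¹ := by ring_nf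
  have : (∑' k : ℕ, (-((n:ℝ) + 1) * gse s t (n + 1) k x))
      = -((n:ℝ) + 1) * Th s t (n + 1) x := by
    rw [tsum_mul_left]; rfl
  rw [this] at hmain
  exact hmain

lemma theta_eq_Th0 (hst : s < t) (h1 : t - s < 1) {x : ℝ} (hx : -s < x) :
    (psi (x + t) - psi (x + s)) / (t - s) - (1 + (2 * x + s + t)) / (2 * (x + s) * (x + t))
      = (t - s)⁻¹ * Th s t 0 x := by
  have hv : (0:ℝ) < t - s := by linarith
  have ha : (0:ℝ) < x + s := by linarith
  have hb : (0:ℝ) < x + t := by linarith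
  set dfun : ℕ → ℝ := fun k => (x + s + k)⁻¹ - (x + t + k)⁻¹ with hdfun
  set rfun : ℕ → ℝ := fun k => ((1 + (t - s)) * (x + (s + k))⁻¹ - (1 - (t - s)) * (x + (t + k))⁻¹
    - (1 + (t - s)) * (x + (s + k + 1))⁻¹ + (1 - (t - s)) * (x + (t + k + 1))⁻¹) / 2 with hrfun
  have hd : Summable dfun := summable_d hst hx
  have hgs : Summable (fun k => gse s t 0 k x) := summable_gse hst h1 0 hx
  have hdg : ∀ k : ℕ, gse s t 0 k x = dfun k - rfun k := by
    intro k
    simp only [gse, hdfun, hrfun, zero_add, pow_one]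
    ring
  have hr : Summable rfun := by
    have := hd.sub hgs
    apply this.congr
    intro k
    simp only [Pi.sub_apply, hdg k]
    ring
  -- telescoping sum for rfun
  set U : ℕ → ℝ := fun k => ((1 + (t - s)) * (x + s + k)⁻¹ - (1 - (t - s)) * (x + t + k)⁻¹) / 2
    with hU
  have hrU : ∀ k : ℕ, rfun k = U k - U (k + 1) := by
    intro k
    simp only [hrfun, hU]
    push_cast
    ring
  have hUlim : Tendsto U atTop (𝓝 0) := by
    have h1' : Tendsto (fun k : ℕ => (x + s + k)⁻¹) atTop (𝓝 0) := by
      apply Tendsto.inv_tendsto_atTop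
      apply tendsto_atTop_add_const_left
      exact tendsto_natCast_atTop_atTop
    have h2' : Tendsto (fun k : ℕ => (x + t + k)⁻¹) atTop (𝓝 0) := by
      apply Tendsto.inv_tendsto_atTop
      apply tendsto_atTop_add_const_left
      exact tendsto_natCast_atTop_atTop
    have := ((h1'.const_mul (1 + (t - s))).sub (h2'.const_mul (1 - (t - s)))).div_const 2
    simpa using this
  have htsum_r : ∑' k, rfun k = U 0 := by
    have hpart : Tendsto (fun N => ∑ k ∈ Finset.range N, rfun k) atTop (𝓝 (U 0)) := by
      have : ∀ N, ∑ k ∈ Finset.range N, rfun k = U 0 - U N := by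
        intro N
        rw [Finset.sum_congr rfl (fun k _ => hrU k)]
        exact Finset.sum_range_sub' U N
      rw [funext this]
      simpa using tendsto_const_nhds.sub hUlim
    exact tendsto_nhds_unique hr.hasSum.tendsto_sum_nat hpart
  have hTh : Th s t 0 x = (∑' k, dfun k) - ∑' k, rfun k := by
    rw [Th, tsum_congr hdg, Summable.tsum_sub hd hr]
  rw [hTh, htsum_r, psi_diff s t hst hx]
  have hU0 : U 0 = ((1 + (t - s)) * (x + s)⁻¹ - (1 - (t - s)) * (x + t)⁻¹) / 2 := by
    simp [hU]
  rw [hU0]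
  have hdd : (∑' k, dfun k) = ∑' (k : ℕ), ((x + s + ↑k)⁻¹ - (x + t + ↑k)⁻¹) := rfl
  rw [← hdd]
  field_simp
  ring


section s2
variable {s t : ℝ}

lemma iter_theta (hst : s < t) (h1 : t - s < 1) :
    ∀ n : ℕ, ∀ x : ℝ, -s < x →
      iteratedDeriv n (fun x : ℝ =>
          (psi (x + t) - psi (x + s)) / (t - s) -
            (1 + (2 * x + s + t)) / (2 * (x + s) * (x + t))) x
        = (-1 : ℝ) ^ n * (n.factorial : ℝ) * (t - s)⁻¹ * Th s t n x := by
  intro n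
  induction n with
  | zero =>
    intro x hx
    simp only [iteratedDeriv_zero, pow_zero, Nat.factorial_zero, Nat.cast_one, one_mul]
    exact theta_eq_Th0 hst h1 hx
  | succ n ih =>
    intro x hx
    rw [iteratedDeriv_succ]
    have hev : iteratedDeriv n (fun x : ℝ =>
        (psi (x + t) - psi (x + s)) / (t - s) -
          (1 + (2 * x + s + t)) / (2 * (x + s) * (x + t)))
        =ᶠ[𝓝 x] (fun y => (-1 : ℝ) ^ n * (n.factorial : ℝ) * (t - s)⁻¹ * Th s t n y) := by
      filter_upwards [Ioi_mem_nhds hx] with y hy using ih y hy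
    rw [hev.deriv_eq]
    have hd := (hasDerivAt_Th hst h1 n hx).const_mul
      ((-1 : ℝ) ^ n * (n.factorial : ℝ) * (t - s)⁻¹)
    have : (fun y => (-1 : ℝ) ^ n * (n.factorial : ℝ) * (t - s)⁻¹ * Th s t n y)
        = (fun y => ((-1 : ℝ) ^ n * (n.factorial : ℝ) * (t - s)⁻¹) * Th s t n y) := rfl
    rw [this, hd.deriv]
    rw [Nat.factorial_succ, pow_succ]
    push_cast
    ring


end s2

theorem theta_one_completely_monotonic (s t : ℝ) (hst : s < t) (h1 : t - s < 1) :
    ∀ n : ℕ, ∀ x : ℝ, -s < x →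
      0 ≤ (-1 : ℝ) ^ n *
        iteratedDeriv n (fun x : ℝ =>
          (psi (x + t) - psi (x + s)) / (t - s) -
            (1 + (2 * x + s + t)) / (2 * (x + s) * (x + t))) x := by
  intro n x hx
  rw [iter_theta hst h1 n x hx]
  have hTh : 0 ≤ Th s t n x := tsum_nonneg (fun k => gse_nonneg hst h1 n k hx)
  have hv : (0:ℝ) < (t - s)⁻¹ := by
    have : (0:ℝ) < t - s := by linarith
    positivity
  have h11 : (-1 : ℝ) ^ n * ((-1 : ℝ) ^ n * (n.factorial : ℝ) * (t - s)⁻¹ * Th s t n x)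
      = (n.factorial : ℝ) * ((t - s)⁻¹ * Th s t n x) := by
    rw [← mul_assoc, ← mul_assoc, ← mul_assoc, ← mul_pow]
    norm_num [mul_assoc]
  rw [h11]
  positivity
end params
end

section
/- For real s, the function θ_{s,s;λ}(x) = ψ'(x+s) − (1+2λ(x+s))/(2(x+s)²) is completely monotonic on (−s,∞) if and only if λ ≤ 1. -/
open Filter Topology Finset

namespace ThetaCM

/-- `pp m t = ∑' k, 1/(t+k)^m`. -/
noncomputable def pp (m : ℕ) (t : ℝ) : ℝ := ∑' k : ℕ, ((t + k) ^ m)⁻¹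

lemma summable_pp {m : ℕ} (hm : 2 ≤ m) {t : ℝ} (ht : 0 < t) :
    Summable (fun k : ℕ => ((t + k) ^ m)⁻¹) := by
  rw [← summable_nat_add_iff 1]
  have h2 : Summable (fun k : ℕ => (((k : ℝ) + 1) ^ 2)⁻¹) := by
    have := Real.summable_one_div_nat_pow.mpr (le_refl 2)
    rw [← summable_nat_add_iff 1] at this
    simpa [one_div] using this
  refine Summable.of_nonneg_of_le (fun k => by positivity) (fun k => ?_) h2
  have h1 : ((k : ℝ) + 1) ^ 2 ≤ ((k : ℝ) + 1) ^ m :=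
    pow_le_pow_right₀ (by linarith [Nat.cast_nonneg (α := ℝ) k]) hm
  have h3 : ((k : ℝ) + 1) ^ m ≤ (t + (k + 1 : ℕ)) ^ m := by
    apply pow_le_pow_left₀ (by positivity)
    push_cast; linarith
  exact inv_anti₀ (by positivity) (h1.trans h3)

lemma pp_pos {m : ℕ} (hm : 2 ≤ m) {t : ℝ} (ht : 0 < t) : 0 < pp m t := by
  have := summable_pp hm ht
  exact Summable.tsum_pos this (fun k => by positivity) 0 (by positivity)

end ThetaCM
namespace ThetaCM

lemma hasDerivAt_inv_pow {m : ℕ} {c x : ℝ} (h : x + c ≠ 0) :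
    HasDerivAt (fun y : ℝ => (((y : ℝ) + c) ^ (m + 1))⁻¹)
      (-((m : ℝ) + 1) * ((x + c) ^ (m + 2))⁻¹) x := by
  have h1 : HasDerivAt (fun y : ℝ => ((y : ℝ) + c) ^ (m + 1))
      (((m : ℝ) + 1) * (x + c) ^ m) x := by
    have := ((hasDerivAt_id x).add_const c).fun_pow (m + 1)
    simpa using this
  have h2 := h1.fun_inv (pow_ne_zero _ h)
  refine h2.congr_deriv ?_
  rw [pow_add, pow_add]
  field_simp

end ThetaCM
namespace ThetaCM

lemma hasDerivAt_pp {m : ℕ} {t : ℝ} (ht : 0 < t) :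
    HasDerivAt (pp (m + 2)) (-((m : ℝ) + 2) * pp (m + 3) t) t := by
  have h2 : (0 : ℝ) < t / 2 := by linarith
  have key : HasDerivAt (pp (m + 2))
      (∑' k : ℕ, (-((m : ℝ) + 2) * ((t + k) ^ (m + 3))⁻¹)) t := by
    refine hasDerivAt_of_tendstoUniformlyOn (f := fun N (x : ℝ) =>
        ∑ k ∈ Finset.range N, ((x + k) ^ (m + 2))⁻¹)
      (f' := fun N (x : ℝ) => ∑ k ∈ Finset.range N,
        (-((m : ℝ) + 2) * ((x + k) ^ (m + 3))⁻¹)) (g := pp (m + 2))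
      (g' := fun x => ∑' k : ℕ, (-((m : ℝ) + 2) * ((x + k) ^ (m + 3))⁻¹))
      (l := atTop) (isOpen_Ioi (a := t / 2)) ?_ ?_ ?_ ?_
    · -- uniform convergence of derivatives on Ioi (t/2)
      apply tendstoUniformlyOn_tsum_nat
        (u := fun k : ℕ => ((m : ℝ) + 2) * ((t / 2 + k) ^ (m + 3))⁻¹)
        ((summable_pp (by omega) h2).mul_left _)
      intro k x hx
      rw [Set.mem_Ioi] at hx
      rw [norm_mul, norm_neg, norm_inv]
      have hxk : (0 : ℝ) < t / 2 + k := by positivity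
      have hxk2 : (0 : ℝ) < x + k :=
        add_pos_of_pos_of_nonneg (lt_trans h2 hx) (Nat.cast_nonneg k)
      have hle : (t / 2 + k) ^ (m + 3) ≤ (x + k) ^ (m + 3) := by
        apply pow_le_pow_left₀ hxk.le; linarith
      rw [Real.norm_eq_abs, Real.norm_eq_abs, abs_of_nonneg (by positivity),
        abs_of_nonneg (pow_nonneg hxk2.le _)]
      gcongr
    · -- each partial sum has the termwise derivative
      filter_upwards with N x hx
      rw [Set.mem_Ioi] at hx
      apply HasDerivAt.fun_sum
      intro k _
      have hxk2 : (0 : ℝ) < x + k :=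
        add_pos_of_pos_of_nonneg (lt_trans h2 hx) (Nat.cast_nonneg k)
      exact (hasDerivAt_inv_pow (m := m + 1) (c := (k : ℝ)) hxk2.ne').congr_deriv (by push_cast; ring)
    · -- pointwise convergence to pp (m+2)
      intro x hx
      rw [Set.mem_Ioi] at hx
      have hx0 : (0 : ℝ) < x := lt_trans h2 hx
      exact (summable_pp (by omega) hx0).hasSum.tendsto_sum_nat
    · exact Set.mem_Ioi.mpr (by linarith)
  rw [tsum_mul_left] at key
  exact key

end ThetaCM
namespace ThetaCM

open Real

/-- summand of the digamma series -/
noncomputable def aa (k : ℕ) (x : ℝ) : ℝ := ((k : ℝ) + 1)⁻¹ - (x + k)⁻¹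

/-- the digamma function (for positive arguments) -/
noncomputable def DD (x : ℝ) : ℝ := -eulerMascheroniConstant + ∑' k : ℕ, aa k x

lemma abs_aa_le {k : ℕ} {x e R : ℝ} (he : 0 < e) (hex : e ≤ x) (hxR : x ≤ R) :
    |aa k x| ≤ ((R + 1) / min e 1) * (((k : ℝ) + 1) ^ 2)⁻¹ := by
  have hx : 0 < x := lt_of_lt_of_le he hex
  have hk : (0 : ℝ) ≤ k := Nat.cast_nonneg k
  have hxk : 0 < x + k := by linarith
  have hkey : aa k x = (x - 1) / (((k : ℝ) + 1) * (x + k)) := by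
    unfold aa; field_simp; ring
  rw [hkey, abs_div, abs_of_pos (mul_pos (by positivity) hxk)]
  have hmin : 0 < min e 1 := lt_min he one_pos
  have h5 : min e 1 * ((k : ℝ) + 1) ≤ x + k := by
    have h2 : min e 1 ≤ x := le_trans (min_le_left _ _) hex
    have h3 : min e 1 ≤ 1 := min_le_right _ _
    nlinarith
  have h1 : min e 1 * (((k : ℝ) + 1) ^ 2) ≤ ((k : ℝ) + 1) * (x + k) := by
    have := mul_le_mul_of_nonneg_right h5 (show (0:ℝ) ≤ (k:ℝ) + 1 by positivity)
    nlinarith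
  have h4 : |x - 1| ≤ R + 1 := by
    rw [abs_le]; constructor <;> linarith
  have hrw : ((R + 1) / min e 1) * (((k : ℝ) + 1) ^ 2)⁻¹
      = (R + 1) / (min e 1 * ((k : ℝ) + 1) ^ 2) := by
    rw [div_eq_mul_inv, div_eq_mul_inv, mul_assoc, ← mul_inv]
  rw [hrw]
  exact div_le_div₀ (by linarith) h4 (mul_pos hmin (by positivity)) h1

lemma summable_sq_inv : Summable (fun k : ℕ => (((k : ℝ) + 1) ^ 2)⁻¹) := by
  have := Real.summable_one_div_nat_pow.mpr (le_refl 2)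
  rw [← summable_nat_add_iff 1] at this
  simpa [one_div] using this

lemma summable_aa {x : ℝ} (hx : 0 < x) : Summable (fun k : ℕ => aa k x) := by
  apply Summable.of_norm
  refine Summable.of_nonneg_of_le (fun k => norm_nonneg _)
    (fun k => abs_aa_le (he := hx) (R := x) le_rfl le_rfl) ?_
  exact summable_sq_inv.mul_left _

lemma hasDerivAt_tsum_aa {x : ℝ} (hx : 0 < x) :
    HasDerivAt (fun y : ℝ => ∑' k : ℕ, aa k y) (pp 2 x) x := by
  have h2 : (0 : ℝ) < x / 2 := by linarith
  refine hasDerivAt_of_tendstoUniformlyOn (f := fun N (y : ℝ) =>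
      ∑ k ∈ Finset.range N, aa k y)
    (f' := fun N (y : ℝ) => ∑ k ∈ Finset.range N, ((y + k) ^ 2)⁻¹)
    (g := fun y => ∑' k : ℕ, aa k y)
    (g' := fun y => ∑' k : ℕ, ((y + k) ^ 2)⁻¹)
    (l := atTop) (isOpen_Ioi (a := x / 2)) ?_ ?_ ?_ ?_
  · apply tendstoUniformlyOn_tsum_nat
      (u := fun k : ℕ => ((x / 2 + k) ^ 2)⁻¹) (summable_pp le_rfl h2)
    intro k y hy
    rw [Set.mem_Ioi] at hy
    have h3 : (0 : ℝ) < x / 2 + k := by positivity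
    have h4 : (0 : ℝ) < y + k :=
      add_pos_of_pos_of_nonneg (lt_trans h2 hy) (Nat.cast_nonneg k)
    rw [Real.norm_eq_abs, abs_of_nonneg (by positivity)]
    gcongr
  · filter_upwards with N y hy
    rw [Set.mem_Ioi] at hy
    apply HasDerivAt.fun_sum
    intro k _
    have h4 : (0 : ℝ) < y + k :=
      add_pos_of_pos_of_nonneg (lt_trans h2 hy) (Nat.cast_nonneg k)
    have := hasDerivAt_inv_pow (m := 0) (c := (k : ℝ)) h4.ne'
    simp only [pow_one, Nat.cast_zero] at this
    have h5 := this.const_sub (((k : ℝ) + 1)⁻¹)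
    have h6 : HasDerivAt (fun y : ℝ => aa k y) (((y + k) ^ 2)⁻¹) y := by
      simpa [aa] using h5
    exact h6
  · intro y hy
    rw [Set.mem_Ioi] at hy
    exact (summable_aa (lt_trans h2 hy)).hasSum.tendsto_sum_nat
  · exact Set.mem_Ioi.mpr (by linarith)

end ThetaCM

namespace ThetaCM
open Real

/-- log of Euler's Gamma-approximating sequence -/
noncomputable def FF (n : ℕ) (x : ℝ) : ℝ :=
  x * Real.log n + Real.log (n.factorial) - ∑ k ∈ range (n + 1), Real.log (x + k)

noncomputable def FF' (n : ℕ) (x : ℝ) : ℝ :=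
  Real.log n - ∑ k ∈ range (n + 1), (x + k)⁻¹

noncomputable def cc (n : ℕ) : ℝ := Real.log n - (harmonic (n + 1) : ℝ)

lemma hasDerivAt_FF (n : ℕ) {x : ℝ} (hx : 0 < x) : HasDerivAt (FF n) (FF' n x) x := by
  have h1 : HasDerivAt (fun y : ℝ => y * Real.log n + Real.log (n.factorial)) (Real.log n) x := by
    simpa using ((hasDerivAt_id x).mul_const (Real.log n)).add_const (Real.log (n.factorial))
  have h2 : HasDerivAt (fun y : ℝ => ∑ k ∈ range (n + 1), Real.log (y + k))
      (∑ k ∈ range (n + 1), (x + k)⁻¹) x := by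
    apply HasDerivAt.fun_sum
    intro k _
    have hxk : (0 : ℝ) < x + k := add_pos_of_pos_of_nonneg hx (Nat.cast_nonneg k)
    simpa [Function.comp_def] using (Real.hasDerivAt_log hxk.ne').comp x ((hasDerivAt_id x).add_const (k : ℝ))
  exact h1.fun_sub h2

lemma FF_tendsto_logGamma {x : ℝ} (hx : 0 < x) :
    Tendsto (fun n => FF n x) atTop (𝓝 (Real.log (Real.Gamma x))) := by
  have h0 : Tendsto (fun n => Real.log (Real.GammaSeq x n)) atTop
      (𝓝 (Real.log (Real.Gamma x))) :=
    ((Real.continuousAt_log (Real.Gamma_pos_of_pos hx).ne').tendsto).comp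
      (Real.GammaSeq_tendsto_Gamma x)
  apply h0.congr'
  filter_upwards [eventually_ge_atTop 1] with n hn
  have hn0 : (0 : ℝ) < n := by exact_mod_cast hn
  have hprod : (0 : ℝ) < ∏ j ∈ range (n + 1), (x + j) := by
    apply Finset.prod_pos
    intro j _
    exact add_pos_of_pos_of_nonneg hx (Nat.cast_nonneg j)
  rw [Real.GammaSeq, Real.log_div (by positivity) hprod.ne', Real.log_mul (by positivity)
    (by exact_mod_cast (Nat.factorial_pos n).ne'), Real.log_rpow hn0,
    Real.log_prod (fun j _ => (add_pos_of_pos_of_nonneg hx (Nat.cast_nonneg j)).ne')]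
  simp [FF]

lemma FF'_eq (n : ℕ) (x : ℝ) : FF' n x = cc n + ∑ k ∈ range (n + 1), aa k x := by
  have hh : ((harmonic (n + 1) : ℚ) : ℝ) = ∑ k ∈ range (n + 1), ((k : ℝ) + 1)⁻¹ := by
    rw [harmonic]
    push_cast
    rfl
  rw [FF', cc, hh]
  simp only [aa]
  rw [Finset.sum_sub_distrib]
  ring

lemma cc_tendsto : Tendsto cc atTop (𝓝 (-eulerMascheroniConstant)) := by
  have h1 : Tendsto (fun n : ℕ => -((harmonic n : ℝ) - Real.log n) - ((n : ℝ) + 1)⁻¹) atTop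
      (𝓝 (-eulerMascheroniConstant - 0)) :=
    (Real.tendsto_harmonic_sub_log.neg).sub
      (tendsto_one_div_add_atTop_nhds_zero_nat.congr (by intro n; rw [one_div]))
  rw [sub_zero] at h1
  apply h1.congr
  intro n
  rw [cc, harmonic_succ]
  push_cast
  ring



end ThetaCM
namespace ThetaCM
open Real

lemma TUO_add {F G : ℕ → ℝ → ℝ} {f g : ℝ → ℝ} {s : Set ℝ}
    (hF : TendstoUniformlyOn F f atTop s) (hG : TendstoUniformlyOn G g atTop s) :
    TendstoUniformlyOn (fun n x => F n x + G n x) (fun x => f x + g x) atTop s := by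
  rw [Metric.tendstoUniformlyOn_iff] at hF hG ⊢
  intro ε hε
  filter_upwards [hF (ε / 2) (by linarith), hG (ε / 2) (by linarith)] with n h1 h2 x hx
  calc dist (f x + g x) (F n x + G n x) ≤ dist (f x) (F n x) + dist (g x) (G n x) :=
        dist_add_add_le _ _ _ _
    _ < ε / 2 + ε / 2 := add_lt_add (h1 x hx) (h2 x hx)
    _ = ε := by ring

lemma tlu_FF' : TendstoLocallyUniformlyOn (fun n x => FF' n x) DD atTop (Set.Ioi 0) := by
  rw [tendstoLocallyUniformlyOn_iff_forall_isCompact isOpen_Ioi]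
  intro K hK hKc
  rcases K.eq_empty_or_nonempty with rfl | hne
  · exact tendstoUniformlyOn_empty
  obtain ⟨e, heK, helb⟩ := hKc.exists_isLeast hne
  obtain ⟨R, hRK, hgub⟩ := hKc.exists_isGreatest hne
  have he : (0 : ℝ) < e := hK heK
  have hsub : K ⊆ Set.Icc e R := fun y hy => ⟨helb hy, hgub hy⟩
  refine TendstoUniformlyOn.mono ?_ hsub
  have hpart2 : TendstoUniformlyOn (fun N x => ∑ k ∈ range N, aa k x)
      (fun x => ∑' k : ℕ, aa k x) atTop (Set.Icc e R) := by
    apply tendstoUniformlyOn_tsum_nat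
      (u := fun k : ℕ => ((R + 1) / min e 1) * (((k : ℝ) + 1) ^ 2)⁻¹)
      (summable_sq_inv.mul_left _)
    intro k x hx
    rw [Real.norm_eq_abs]
    exact abs_aa_le he hx.1 hx.2
  have hpart2' : TendstoUniformlyOn (fun n x => ∑ k ∈ range (n + 1), aa k x)
      (fun x => ∑' k : ℕ, aa k x) atTop (Set.Icc e R) :=
    fun u hu => (tendsto_add_atTop_nat 1).eventually (hpart2 u hu)
  have hpart1 : TendstoUniformlyOn (fun n (_ : ℝ) => cc n)
      (fun _ => -eulerMascheroniConstant) atTop (Set.Icc e R) := by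
    rw [Metric.tendstoUniformlyOn_iff]
    intro ε hε
    filter_upwards [Metric.tendsto_nhds.mp cc_tendsto ε hε] with n hn x _
    rw [dist_comm]; exact hn
  have := TUO_add hpart1 hpart2'
  apply this.congr
  filter_upwards with n x hx
  exact (FF'_eq n x).symm

lemma hasDerivAt_logGamma {x : ℝ} (hx : 0 < x) :
    HasDerivAt (fun y : ℝ => Real.log (Real.Gamma y)) (DD x) x := by
  refine hasDerivAt_of_tendstoLocallyUniformlyOn isOpen_Ioi tlu_FF' ?_
    (fun y hy => FF_tendsto_logGamma hy) hx
  filter_upwards with n y hy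
  exact hasDerivAt_FF n hy

lemma hasDerivAt_DD {x : ℝ} (hx : 0 < x) : HasDerivAt DD (pp 2 x) x :=
  (hasDerivAt_tsum_aa hx).const_add _

lemma psi_eq {x : ℝ} (hx : 0 < x) : psi x = DD x := (hasDerivAt_logGamma hx).deriv

lemma deriv_psi {t : ℝ} (ht : 0 < t) : deriv psi t = pp 2 t := by
  have h2 : psi =ᶠ[𝓝 t] DD :=
    Filter.eventuallyEq_of_mem (isOpen_Ioi.mem_nhds ht) (fun y hy => psi_eq hy)
  rw [h2.deriv_eq]
  exact (hasDerivAt_DD ht).deriv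

end ThetaCM
namespace ThetaCM
open Real

noncomputable def gg (lam : ℝ) (n : ℕ) (t : ℝ) : ℝ :=
  ((n + 1).factorial : ℝ) * pp (n + 2) t - ((n + 1).factorial : ℝ) / 2 * (t ^ (n + 2))⁻¹
    - (n.factorial : ℝ) * lam * (t ^ (n + 1))⁻¹

lemma hasDerivAt_gg_shift (lam s : ℝ) (n : ℕ) {x : ℝ} (hx : 0 < x + s) :
    HasDerivAt (fun y : ℝ => gg lam n (y + s)) (-gg lam (n + 1) (x + s)) x := by
  have hshift : HasDerivAt (fun y : ℝ => y + s) 1 x := (hasDerivAt_id x).add_const s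
  have h1 : HasDerivAt (fun y : ℝ => pp (n + 2) (y + s))
      (-((n : ℝ) + 2) * pp (n + 3) (x + s)) x := by
    simpa [Function.comp_def] using (hasDerivAt_pp (m := n) hx).comp x hshift
  have h2 : HasDerivAt (fun y : ℝ => (((y + s)) ^ (n + 2))⁻¹)
      (-((n : ℝ) + 2) * ((x + s) ^ (n + 3))⁻¹) x := by
    have := hasDerivAt_inv_pow (m := n + 1) (c := s) hx.ne'
    convert this using 2 <;> push_cast <;> ring
  have h3 : HasDerivAt (fun y : ℝ => (((y + s)) ^ (n + 1))⁻¹)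
      (-((n : ℝ) + 1) * ((x + s) ^ (n + 2))⁻¹) x :=
    hasDerivAt_inv_pow (m := n) (c := s) hx.ne'
  have hmain := ((h1.const_mul (((n + 1).factorial : ℝ))).fun_sub
    (h2.const_mul (((n + 1).factorial : ℝ) / 2))).fun_sub
    ((h3.const_mul ((n.factorial : ℝ) * lam)))
  have hfun : (fun y : ℝ => ((n + 1).factorial : ℝ) * pp (n + 2) (y + s)
      - ((n + 1).factorial : ℝ) / 2 * (((y + s)) ^ (n + 2))⁻¹
      - (n.factorial : ℝ) * lam * (((y + s)) ^ (n + 1))⁻¹)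
      = (fun y : ℝ => gg lam n (y + s)) := by
    funext y; rw [gg]
  rw [hfun] at hmain
  refine hmain.congr_deriv ?_
  rw [gg]
  rw [show (n + 1 + 1).factorial = (n + 2) * (n + 1).factorial from rfl,
    show (n + 1).factorial = (n + 1) * n.factorial from rfl]
  push_cast
  ring

lemma itd (s lam : ℝ) (n : ℕ) : ∀ x ∈ Set.Ioi (-s),
    iteratedDeriv n (fun x : ℝ =>
      deriv psi (x + s) - (1 + 2 * lam * (x + s)) / (2 * (x + s) ^ 2)) x
    = (-1 : ℝ) ^ n * gg lam n (x + s) := by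
  induction n with
  | zero =>
    intro x hx
    rw [Set.mem_Ioi] at hx
    have ht : 0 < x + s := by linarith
    rw [iteratedDeriv_zero, pow_zero, one_mul, deriv_psi ht, gg]
    simp only [Nat.factorial]
    push_cast
    field_simp
    ring
  | succ n ih =>
    intro x hx
    have hx' : 0 < x + s := by rw [Set.mem_Ioi] at hx; linarith
    rw [iteratedDeriv_succ]
    have heq : iteratedDeriv n (fun x : ℝ =>
        deriv psi (x + s) - (1 + 2 * lam * (x + s)) / (2 * (x + s) ^ 2))
        =ᶠ[𝓝 x] (fun y => (-1 : ℝ) ^ n * gg lam n (y + s)) :=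
      Filter.eventuallyEq_of_mem (isOpen_Ioi.mem_nhds hx) ih
    rw [heq.deriv_eq]
    rw [((hasDerivAt_gg_shift lam s n hx').const_mul ((-1 : ℝ) ^ n)).deriv]
    rw [pow_succ]
    ring

end ThetaCM
namespace ThetaCM
open Real

lemma sum_range_cast_add_one (p : ℕ) :
    ∑ i ∈ range p, ((i : ℝ) + 1) = p * (p + 1) / 2 := by
  induction p with
  | zero => simp
  | succ p ih => rw [Finset.sum_range_succ, ih]; push_cast; ring

lemma sum_range_cast_sub (p : ℕ) :
    ∑ i ∈ range p, ((p : ℝ) - i) = p * (p + 1) / 2 := by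
  have h1 : ∑ i ∈ range p, ((p : ℝ) - i) = ∑ i ∈ range p, (p : ℝ) - ∑ i ∈ range p, (i : ℝ) :=
    Finset.sum_sub_distrib (fun _ : ℕ => (p : ℝ)) (fun i : ℕ => (i : ℝ))
  have h2 : ∑ i ∈ range p, ((i : ℝ) + 1) = ∑ i ∈ range p, (i : ℝ) + p := by
    rw [Finset.sum_add_distrib, Finset.sum_const, Finset.card_range]; simp
  have h3 := sum_range_cast_add_one p
  rw [h1, Finset.sum_const, Finset.card_range]
  rw [h2] at h3
  simp only [nsmul_eq_mul]
  linarith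

lemma amgm_term {u v : ℝ} (hu : 0 < u) (hv : 0 < v) {i p : ℕ} (hip : i < p) :
    u ^ (i + 1) * v ^ (p - i) ≤
      (((i : ℝ) + 1) * u ^ (p + 1) + ((p : ℝ) - i) * v ^ (p + 1)) / ((p : ℝ) + 1) := by
  have hp0 : (0 : ℝ) < (p : ℝ) + 1 := by positivity
  have hip' : (i : ℝ) < p := by exact_mod_cast hip
  set w₁ : ℝ := ((i : ℝ) + 1) / ((p : ℝ) + 1) with hw₁
  set w₂ : ℝ := ((p : ℝ) - i) / ((p : ℝ) + 1) with hw₂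
  have hw₁0 : 0 ≤ w₁ := by positivity
  have hw₂0 : 0 ≤ w₂ := div_nonneg (by linarith) hp0.le
  have hsum : w₁ + w₂ = 1 := by rw [hw₁, hw₂, ← add_div, div_eq_one_iff_eq hp0.ne']; ring
  have key := Real.geom_mean_le_arith_mean2_weighted hw₁0 hw₂0
    (pow_nonneg hu.le (p + 1)) (pow_nonneg hv.le (p + 1)) hsum
  have e1 : (u ^ (p + 1)) ^ w₁ = u ^ (i + 1) := by
    rw [← Real.rpow_natCast u (p + 1), ← Real.rpow_mul hu.le]
    have : ((p + 1 : ℕ) : ℝ) * w₁ = ((i + 1 : ℕ) : ℝ) := by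
      rw [hw₁]; push_cast; field_simp
    rw [this, Real.rpow_natCast]
  have e2 : (v ^ (p + 1)) ^ w₂ = v ^ (p - i) := by
    rw [← Real.rpow_natCast v (p + 1), ← Real.rpow_mul hv.le]
    have : ((p + 1 : ℕ) : ℝ) * w₂ = ((p - i : ℕ) : ℝ) := by
      rw [hw₂, Nat.cast_sub hip.le]; push_cast; field_simp
    rw [this, Real.rpow_natCast]
  rw [e1, e2] at key
  calc u ^ (i + 1) * v ^ (p - i) ≤ w₁ * u ^ (p + 1) + w₂ * v ^ (p + 1) := key
    _ = (((i : ℝ) + 1) * u ^ (p + 1) + ((p : ℝ) - i) * v ^ (p + 1)) / ((p : ℝ) + 1) := by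
        rw [hw₁, hw₂]; field_simp; try ring

lemma trapezoid {p : ℕ} (hp : 1 ≤ p) {a : ℝ} (ha : 0 < a) :
    ((a ^ p)⁻¹ - ((a + 1) ^ p)⁻¹) / p ≤ ((a ^ (p + 1))⁻¹ + ((a + 1) ^ (p + 1))⁻¹) / 2 := by
  have ha1 : (0 : ℝ) < a + 1 := by linarith
  set u : ℝ := a⁻¹ with hu_def
  set v : ℝ := (a + 1)⁻¹ with hv_def
  have hu : 0 < u := by positivity
  have hv : 0 < v := by positivity
  have huv : u - v = u * v := by rw [hu_def, hv_def]; field_simp; ring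
  have hpows : (a ^ p)⁻¹ = u ^ p ∧ ((a + 1) ^ p)⁻¹ = v ^ p ∧
      (a ^ (p + 1))⁻¹ = u ^ (p + 1) ∧ ((a + 1) ^ (p + 1))⁻¹ = v ^ (p + 1) := by
    refine ⟨?_, ?_, ?_, ?_⟩ <;> rw [← inv_pow]
  rw [hpows.1, hpows.2.1, hpows.2.2.1, hpows.2.2.2]
  have hfact : u ^ p - v ^ p = ∑ i ∈ range p, u ^ (i + 1) * v ^ (p - i) := by
    rw [← geom_sum₂_mul u v p, huv, Finset.sum_mul]
    apply Finset.sum_congr rfl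
    intro i hi
    rw [Finset.mem_range] at hi
    have h1 : p - 1 - i + 1 = p - i := by omega
    calc u ^ i * v ^ (p - 1 - i) * (u * v) = u ^ (i + 1) * v ^ (p - 1 - i + 1) := by ring
      _ = u ^ (i + 1) * v ^ (p - i) := by rw [h1]
  have hbound : u ^ p - v ^ p ≤ (p : ℝ) * (u ^ (p + 1) + v ^ (p + 1)) / 2 := by
    rw [hfact]
    calc ∑ i ∈ range p, u ^ (i + 1) * v ^ (p - i)
        ≤ ∑ i ∈ range p, ((((i : ℝ) + 1) * u ^ (p + 1) + ((p : ℝ) - i) * v ^ (p + 1))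
            / ((p : ℝ) + 1)) :=
          Finset.sum_le_sum (fun i hi => amgm_term hu hv (Finset.mem_range.mp hi))
      _ = ((∑ i ∈ range p, ((i : ℝ) + 1)) * u ^ (p + 1)
            + (∑ i ∈ range p, ((p : ℝ) - i)) * v ^ (p + 1)) / ((p : ℝ) + 1) := by
          rw [← Finset.sum_div, Finset.sum_add_distrib, ← Finset.sum_mul, ← Finset.sum_mul]
      _ = (p : ℝ) * (u ^ (p + 1) + v ^ (p + 1)) / 2 := by
          rw [sum_range_cast_add_one, sum_range_cast_sub]
          field_simp
  have hp0 : (0 : ℝ) < p := by exact_mod_cast hp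
  rw [div_le_div_iff₀ hp0 two_pos]
  calc (u ^ p - v ^ p) * 2 ≤ ((p : ℝ) * (u ^ (p + 1) + v ^ (p + 1)) / 2) * 2 := by linarith
    _ = (u ^ (p + 1) + v ^ (p + 1)) * p := by ring

end ThetaCM
namespace ThetaCM
open Real

lemma telescope_tsum {f : ℕ → ℝ} (hmono : ∀ k, f (k + 1) ≤ f k)
    (hlim : Tendsto f atTop (𝓝 0)) :
    Summable (fun k => f k - f (k + 1)) ∧ ∑' k, (f k - f (k + 1)) = f 0 := by
  have hnn : ∀ k, 0 ≤ f k - f (k + 1) := fun k => by linarith [hmono k]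
  have hps : ∀ n, ∑ i ∈ range n, (f i - f (i + 1)) = f 0 - f n :=
    fun n => Finset.sum_range_sub' f n
  have hanti : Antitone f := antitone_nat_of_succ_le hmono
  have hf0 : ∀ n, 0 ≤ f n := fun n =>
    le_of_tendsto hlim (Filter.eventually_atTop.mpr ⟨n, fun m hm => hanti hm⟩)
  have hsummable : Summable (fun k => f k - f (k + 1)) := by
    apply summable_of_sum_range_le hnn
    intro n
    rw [hps n]
    linarith [hf0 n]
  refine ⟨hsummable, ?_⟩
  have h1 : Tendsto (fun n => ∑ i ∈ range n, (f i - f (i + 1))) atTop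
      (𝓝 (∑' k, (f k - f (k + 1)))) := hsummable.hasSum.tendsto_sum_nat
  have h2 : Tendsto (fun n => ∑ i ∈ range n, (f i - f (i + 1))) atTop (𝓝 (f 0 - 0)) := by
    apply Tendsto.congr (fun n => (hps n).symm)
    exact tendsto_const_nhds.sub hlim
  rw [sub_zero] at h2
  exact tendsto_nhds_unique h1 h2

end ThetaCM
namespace ThetaCM
open Real

lemma tendsto_inv_pow_shift {t : ℝ} (m : ℕ) (hm : m ≠ 0) :
    Tendsto (fun k : ℕ => ((t + k) ^ m)⁻¹) atTop (𝓝 0) := by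
  have h1 : Tendsto (fun k : ℕ => t + (k : ℝ)) atTop atTop :=
    tendsto_atTop_add_const_left atTop t tendsto_natCast_atTop_atTop
  have h2 : Tendsto (fun k : ℕ => (t + (k : ℝ)) ^ m) atTop atTop :=
    (tendsto_pow_atTop hm).comp h1
  exact h2.inv_tendsto_atTop

set_option maxHeartbeats 2000000 in
lemma pp_lower {n : ℕ} {t : ℝ} (ht : 0 < t) :
    (t ^ (n + 2))⁻¹ / 2 + ((n : ℝ) + 1)⁻¹ * (t ^ (n + 1))⁻¹ ≤ pp (n + 2) t := by
  have htk : ∀ k : ℕ, (0 : ℝ) < t + k :=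
    fun k => add_pos_of_pos_of_nonneg ht (Nat.cast_nonneg k)
  set f : ℕ → ℝ := fun k => ((t + k) ^ (n + 2))⁻¹ with hf_def
  set h : ℕ → ℝ := fun k => ((n : ℝ) + 1)⁻¹ * ((t + k) ^ (n + 1))⁻¹ with hh_def
  set e : ℕ → ℝ := fun k => f k / 2 with he_def
  have hcast : ∀ k : ℕ, t + ((k : ℝ) + 1) = t + ((k + 1 : ℕ) : ℝ) := by
    intro k; push_cast; ring
  have hmono_base : ∀ (m : ℕ) (k : ℕ), ((t + (k + 1 : ℕ)) ^ m)⁻¹ ≤ ((t + k) ^ m)⁻¹ := by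
    intro m k
    apply inv_anti₀ (pow_pos (htk k) m)
    apply pow_le_pow_left₀ (htk k).le
    push_cast; linarith
  have hmono_h : ∀ k, h (k + 1) ≤ h k := by
    intro k
    apply mul_le_mul_of_nonneg_left (hmono_base (n + 1) k) (by positivity)
  have hmono_e : ∀ k, e (k + 1) ≤ e k := by
    intro k
    have := hmono_base (n + 2) k
    simp only [he_def, hf_def]
    linarith
  have hlim_h : Tendsto h atTop (𝓝 0) := by
    have := (tendsto_inv_pow_shift (t := t) (n + 1) (by omega)).const_mul (((n : ℝ) + 1)⁻¹)
    rwa [mul_zero] at this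
  have hlim_e : Tendsto e atTop (𝓝 0) := by
    have := (tendsto_inv_pow_shift (t := t) (n + 2) (by omega)).div_const 2
    simp only [zero_div] at this
    exact this
  obtain ⟨hsum_h, htsum_h⟩ := telescope_tsum hmono_h hlim_h
  obtain ⟨hsum_e, htsum_e⟩ := telescope_tsum hmono_e hlim_e
  have hterm : ∀ k, (h k - h (k + 1)) + (e k - e (k + 1)) ≤ f k := by
    intro k
    have htrap := trapezoid (p := n + 1) (by omega) (htk k)
    have hcast2 : ((n + 1 : ℕ) : ℝ) = (n : ℝ) + 1 := by push_cast; ring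
    have ha1 : t + (k : ℝ) + 1 = t + ((k + 1 : ℕ) : ℝ) := by push_cast; ring
    rw [hcast2, ha1, show n + 1 + 1 = n + 2 from rfl] at htrap
    set A : ℝ := ((t + (k : ℝ)) ^ (n + 1))⁻¹ with hA
    set A' : ℝ := ((t + ((k + 1 : ℕ) : ℝ)) ^ (n + 1))⁻¹ with hA'
    set B : ℝ := ((t + (k : ℝ)) ^ (n + 2))⁻¹ with hB
    set B' : ℝ := ((t + ((k + 1 : ℕ) : ℝ)) ^ (n + 2))⁻¹ with hB'
    have hc : (0 : ℝ) < (n : ℝ) + 1 := by positivity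
    have hdiv : ((n : ℝ) + 1)⁻¹ * (A - A') ≤ (B + B') / 2 := by
      rw [div_le_div_iff₀ hc two_pos] at htrap
      rw [inv_mul_le_iff₀ hc]
      linarith
    have hsub : ((n : ℝ) + 1)⁻¹ * A - ((n : ℝ) + 1)⁻¹ * A'
        = ((n : ℝ) + 1)⁻¹ * (A - A') := by ring
    simp only [hh_def, he_def, hf_def]
    linarith [hdiv, hsub]
  have hsum_r : Summable (fun k => (h k - h (k + 1)) + (e k - e (k + 1))) := hsum_h.add hsum_e
  have htsum_r : ∑' k, ((h k - h (k + 1)) + (e k - e (k + 1))) = h 0 + e 0 := by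
    rw [Summable.tsum_add hsum_h hsum_e, htsum_h, htsum_e]
  have hle := Summable.tsum_le_tsum hterm hsum_r (summable_pp (by omega) ht)
  rw [htsum_r] at hle
  have h0 : h 0 + e 0 = (t ^ (n + 2))⁻¹ / 2 + ((n : ℝ) + 1)⁻¹ * (t ^ (n + 1))⁻¹ := by
    simp only [hh_def, he_def, hf_def, Nat.cast_zero, add_zero]
    ring
  rw [h0] at hle
  exact hle

set_option maxHeartbeats 2000000 in
lemma pp2_upper {t : ℝ} (ht : 0 < t) : pp 2 t ≤ (t ^ 2)⁻¹ + t⁻¹ := by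
  have htk : ∀ k : ℕ, (0 : ℝ) < t + k :=
    fun k => add_pos_of_pos_of_nonneg ht (Nat.cast_nonneg k)
  set g : ℕ → ℝ := fun k => (t + k)⁻¹ with hg_def
  have hmono_g : ∀ k, g (k + 1) ≤ g k := by
    intro k
    apply inv_anti₀ (htk k)
    push_cast; linarith
  have hlim_g : Tendsto g atTop (𝓝 0) := by
    have := tendsto_inv_pow_shift (t := t) 1 one_ne_zero
    simpa using this
  obtain ⟨hsum_g, htsum_g⟩ := telescope_tsum hmono_g hlim_g
  have hsum_f := summable_pp (le_refl 2) ht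
  have hshift : Summable (fun k : ℕ => ((t + ((k + 1 : ℕ) : ℝ)) ^ 2)⁻¹) :=
    (summable_nat_add_iff 1).mpr hsum_f
  have hsplit : pp 2 t = ((t + ((0 : ℕ) : ℝ)) ^ 2)⁻¹
      + ∑' k : ℕ, ((t + ((k + 1 : ℕ) : ℝ)) ^ 2)⁻¹ := by
    rw [pp]
    exact Summable.tsum_eq_zero_add hsum_f
  have hterm : ∀ k : ℕ, ((t + ((k + 1 : ℕ) : ℝ)) ^ 2)⁻¹ ≤ g k - g (k + 1) := by
    intro k
    have hb := htk k
    have hb1 : (0 : ℝ) < t + k + 1 := by linarith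
    have hcast : t + ((k + 1 : ℕ) : ℝ) = t + (k : ℝ) + 1 := by push_cast; ring
    have hgs : g k - g (k + 1) = ((t + k) * (t + k + 1))⁻¹ := by
      simp only [hg_def]
      rw [hcast]
      field_simp
      ring
    rw [hcast, hgs]
    apply inv_anti₀ (by positivity)
    nlinarith
  have hle := Summable.tsum_le_tsum hterm hshift hsum_g
  rw [htsum_g] at hle
  rw [hsplit]
  have hg0 : g 0 = t⁻¹ := by simp [hg_def]
  rw [hg0] at hle
  simp only [Nat.cast_zero, add_zero]
  linarith
end ThetaCM
namespace ThetaCM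
open Real

lemma gg_nonneg {lam : ℝ} (hlam : lam ≤ 1) {n : ℕ} {t : ℝ} (ht : 0 < t) :
    0 ≤ gg lam n t := by
  have hlow := pp_lower (n := n) ht
  have hfac : (((n + 1).factorial : ℕ) : ℝ) = ((n : ℝ) + 1) * (n.factorial : ℝ) := by
    rw [Nat.factorial_succ]; push_cast; ring
  have hB : (0 : ℝ) < (t ^ (n + 1))⁻¹ := by positivity
  have hFpos : (0 : ℝ) < ((n + 1).factorial : ℝ) := by
    exact_mod_cast Nat.factorial_pos (n + 1)
  have hfn : (0 : ℝ) ≤ (n.factorial : ℝ) := by positivity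
  have hmul := mul_le_mul_of_nonneg_left hlow hFpos.le
  have hiden : ((n + 1).factorial : ℝ) * ((t ^ (n + 2))⁻¹ / 2 + ((n : ℝ) + 1)⁻¹ * (t ^ (n + 1))⁻¹)
      = ((n + 1).factorial : ℝ) / 2 * (t ^ (n + 2))⁻¹
        + (n.factorial : ℝ) * (t ^ (n + 1))⁻¹ := by
    rw [hfac]; field_simp
  rw [hiden] at hmul
  have hlast : (n.factorial : ℝ) * lam * (t ^ (n + 1))⁻¹
      ≤ (n.factorial : ℝ) * (t ^ (n + 1))⁻¹ := by
    have h1 := mul_nonneg (mul_nonneg hfn (sub_nonneg.mpr hlam)) hB.le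
    nlinarith [h1]
  rw [gg]
  linarith [hmul, hlast]

end ThetaCM

theorem theta_ss_completely_monotonic_iff (s lam : ℝ) :
    (∀ n : ℕ, ∀ x : ℝ, -s < x →
      0 ≤ (-1 : ℝ) ^ n *
        iteratedDeriv n (fun x : ℝ =>
          deriv psi (x + s) - (1 + 2 * lam * (x + s)) / (2 * (x + s) ^ 2)) x) ↔
    lam ≤ 1 := by
  constructor
  · intro H
    by_contra hlam
    push_neg at hlam
    set t : ℝ := (lam - 1)⁻¹ with ht_def
    have hlam1 : 0 < lam - 1 := by linarith
    have ht : 0 < t := inv_pos.mpr hlam1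
    have hx : -s < t - s := by linarith
    have H0 := H 0 (t - s) hx
    rw [pow_zero, one_mul, ThetaCM.itd s lam 0 (t - s) (Set.mem_Ioi.mpr hx),
      pow_zero, one_mul, show t - s + s = t from by ring] at H0
    have hkey : ThetaCM.gg lam 0 t = ThetaCM.pp 2 t - (t ^ 2)⁻¹ / 2 - lam * t⁻¹ := by
      rw [ThetaCM.gg]
      norm_num [Nat.factorial]
      ring
    rw [hkey] at H0
    have hup := ThetaCM.pp2_upper ht
    have htinv : t⁻¹ = lam - 1 := by rw [ht_def, inv_inv]
    have ht2 : (t ^ 2)⁻¹ = (lam - 1) ^ 2 := by rw [← inv_pow, htinv]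
    rw [htinv, ht2] at H0
    rw [ht2] at hup
    nlinarith [H0, hup, hlam1]
  · intro hlam n x hx
    rw [ThetaCM.itd s lam n x (Set.mem_Ioi.mpr hx)]
    have hsq : (-1 : ℝ) ^ n * ((-1 : ℝ) ^ n * ThetaCM.gg lam n (x + s))
        = ThetaCM.gg lam n (x + s) := by
      rw [← mul_assoc, ← mul_pow]
      norm_num
    rw [hsq]
    exact ThetaCM.gg_nonneg hlam (by linarith : (0:ℝ) < x + s)
end
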